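/- arXiv:2503.13853 — 2 statements merged into one kernel-verified Lean document; each statement's English description precedes it below -/
import Mathlib

section
/- Let ω₂ be a majorant satisfying the Hardy–Littlewood condition and ψ ∈ 𝓛_{ω₂}(𝕋) with seminorm L. Then there is a constant M > 0 such that for all ξ ∈ 𝕋 and 0 ≤ r₂ < r₁ < 1, |Q[ψ](r₁ξ) - Q[ψ](r₂ξ)| ≤ M·L·ω₂(r₁ - r₂). -/
open Complex

/-- `Q[ψ](z) = (1/2π)∫₀^{2π} z̄ e^{it} ψ(e^{it}) (1-|z|²)/(1-z̄e^{it})² dt`. -/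
noncomputable def Qop (ψ : ℂ → ℂ) (z : ℂ) : ℂ :=
  (1 / (2 * Real.pi)) • ∫ t in (0:ℝ)..(2 * Real.pi),
    (starRingEnd ℂ) z * Complex.exp (t * Complex.I) * ψ (Complex.exp (t * Complex.I)) *
      ((1 - ‖z‖ ^ 2 : ℝ) : ℂ) /
        (1 - (starRingEnd ℂ) z * Complex.exp (t * Complex.I)) ^ 2

noncomputable def Complex.abs : AbsoluteValue ℂ ℝ :=
  IsAbsoluteValue.toAbsoluteValue (norm : ℂ → ℝ)

lemma Complex.norm_eq_abs (z : ℂ) : ‖z‖ = Complex.abs z := rfl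

lemma Complex.sq_abs (z : ℂ) : Complex.abs z ^ 2 = Complex.normSq z := Complex.sq_norm z

lemma Complex.abs_apply (z : ℂ) : Complex.abs z = Real.sqrt (Complex.normSq z) := by
  rw [← Complex.norm_eq_abs, ← Complex.sq_norm, Real.sqrt_sq (norm_nonneg _)]

lemma Complex.abs_exp_ofReal_mul_I (t : ℝ) : Complex.abs (Complex.exp (t * Complex.I)) = 1 :=
  Complex.norm_exp_ofReal_mul_I t

lemma Complex.abs_ofReal (r : ℝ) : Complex.abs (r : ℂ) = |r| := by
  rw [← Complex.norm_eq_abs]; simp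

lemma Complex.abs_conj (z : ℂ) : Complex.abs ((starRingEnd ℂ) z) = Complex.abs z := by
  rw [← Complex.norm_eq_abs, ← Complex.norm_eq_abs]; simp

lemma Complex.continuous_abs : Continuous Complex.abs := continuous_norm

lemma Complex.abs_mul_exp_arg_mul_I (x : ℂ) :
    (Complex.abs x : ℂ) * Complex.exp (Complex.arg x * Complex.I) = x :=
  Complex.norm_mul_exp_arg_mul_I x

noncomputable def ee (t : ℝ) : ℂ := Complex.exp (t * Complex.I)

lemma abs_ee (t : ℝ) : Complex.abs (ee t) = 1 := Complex.abs_exp_ofReal_mul_I t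

lemma ee_cont : Continuous ee := by
  exact Complex.continuous_exp.comp (by continuity)

lemma ee_add (s t : ℝ) : ee (s + t) = ee s * ee t := by
  simp [ee, Complex.exp_add, add_mul, Complex.ofReal_add]

lemma ee_periodic : Function.Periodic ee (2 * Real.pi) := by
  intro t
  rw [ee_add]
  simp [ee, Complex.ofReal_mul]


lemma abs_ee_sub_one (s : ℝ) : Complex.abs (ee s - 1) = 2 * |Real.sin (s / 2)| := by
  have h : ee s - 1 = (Real.cos s - 1 : ℝ) + (Real.sin s : ℝ) * Complex.I := by
    simp [ee, Complex.exp_mul_I]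
    push_cast
    ring
  rw [h]
  rw [Complex.abs_apply, Complex.normSq_add_mul_I]
  have h2 : (Real.cos s - 1) ^ 2 + Real.sin s ^ 2 = (2 * |Real.sin (s/2)|) ^ 2 := by
    have hh : Real.sin (s/2) ^ 2 = 1/2 - Real.cos (2 * (s/2)) / 2 := Real.sin_sq_eq_half_sub (s/2)
    rw [show 2 * (s/2) = s by ring] at hh
    have hpyth := Real.sin_sq_add_cos_sq s
    rw [mul_pow, _root_.sq_abs]
    nlinarith
  rw [h2, Real.sqrt_sq (by positivity)]

lemma sq_abs_one_sub_mul {v : ℂ} (hv : Complex.abs v = 1) (r : ℝ) :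
    Complex.abs (1 - (r:ℂ) * v) ^ 2 = (1 - r) ^ 2 + r * Complex.abs (1 - v) ^ 2 := by
  have h1 : Complex.abs (1 - (r:ℂ) * v) ^ 2 = Complex.normSq (1 - (r:ℂ)*v) := Complex.sq_abs _
  have h2 : Complex.abs (1 - v) ^ 2 = Complex.normSq (1 - v) := Complex.sq_abs _
  have hv2 : Complex.normSq v = 1 := by
    rw [← Complex.sq_abs, hv]; norm_num
  rw [h1, h2]
  rw [Complex.normSq_sub, Complex.normSq_sub]
  simp [Complex.normSq_mul, hv2, Complex.normSq_ofReal]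
  ring

noncomputable def Kk (u : ℂ) (r t : ℝ) : ℂ :=
  (r:ℂ) * u * ee t * ((1 - r ^ 2 : ℝ) : ℂ) / (1 - (r:ℂ) * u * ee t) ^ 2

lemma den_abs {u : ℂ} (hu : Complex.abs u = 1) {r : ℝ} (h0 : 0 ≤ r) (t : ℝ) :
    Complex.abs ((r:ℂ) * u * ee t) = r := by
  simp [map_mul, hu, abs_ee, Complex.abs_ofReal, _root_.abs_of_nonneg h0]

lemma den_lb {u : ℂ} (hu : Complex.abs u = 1) {r : ℝ} (h0 : 0 ≤ r) (h1 : r < 1) (t : ℝ) :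
    1 - r ≤ Complex.abs (1 - (r:ℂ) * u * ee t) := by
  calc 1 - r = Complex.abs 1 - Complex.abs ((r:ℂ) * u * ee t) := by
        rw [den_abs hu h0 t]; simp
    _ ≤ Complex.abs (1 - (r:ℂ) * u * ee t) := by
        have := norm_sub_norm_le (1 : ℂ) ((r:ℂ) * u * ee t)
        simpa [Complex.norm_eq_abs, Complex.abs_ofReal] using this

lemma den_ne {u : ℂ} (hu : Complex.abs u = 1) {r : ℝ} (h0 : 0 ≤ r) (h1 : r < 1) (t : ℝ) :
    (1 - (r:ℂ) * u * ee t) ≠ 0 := by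
  intro h
  have := den_lb hu h0 h1 t
  rw [h] at this
  simp at this
  linarith

lemma Kk_contOn {u : ℂ} (hu : Complex.abs u = 1) {r : ℝ} (h0 : 0 ≤ r) (h1 : r < 1) :
    Continuous (fun t => Kk u r t) := by
  apply Continuous.div
  · exact (continuous_const.mul ee_cont).mul continuous_const
  · exact (continuous_const.sub (continuous_const.mul ee_cont)).pow 2
  · intro t
    exact pow_ne_zero 2 (den_ne hu h0 h1 t)

lemma int_Kk_zero {u : ℂ} (hu : Complex.abs u = 1) {r : ℝ} (h0 : 0 ≤ r) (h1 : r < 1) :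
    ∫ t in (0:ℝ)..(2 * Real.pi), Kk u r t = 0 := by
  have key : ∀ t ∈ Set.uIcc (0:ℝ) (2 * Real.pi),
      HasDerivAt (fun s : ℝ => ((1 - r ^ 2 : ℝ) : ℂ) * (-Complex.I) * (1 - (r:ℂ) * u * ee s)⁻¹)
        (Kk u r t) t := by
    intro t _
    have hee : HasDerivAt ee (ee t * Complex.I) t := by
      have h1 : HasDerivAt (fun z : ℂ => Complex.exp (z * Complex.I)) 
          (Complex.exp ((t:ℂ) * Complex.I) * Complex.I) (t:ℂ) := by
        have h := ((Complex.hasDerivAt_exp ((t:ℂ) * Complex.I)).comp (t:ℂ)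
          ((hasDerivAt_id (t:ℂ)).mul_const Complex.I))
        simp only [one_mul] at h
        exact h
      exact h1.comp_ofReal
    have hden : HasDerivAt (fun s : ℝ => 1 - (r:ℂ) * u * ee s) (-((r:ℂ) * u * (ee t * Complex.I))) t := by
      have h := ((hasDerivAt_const t (1:ℂ)).sub ((hee.const_mul ((r:ℂ) * u))))
      simp only [zero_sub] at h
      exact h
    have hinv : HasDerivAt (fun s : ℝ => (1 - (r:ℂ) * u * ee s)⁻¹)
        (-((1 - (r:ℂ) * u * ee t) ^ 2)⁻¹ * (-((r:ℂ) * u * (ee t * Complex.I)))) t := by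
      have h2 := hasDerivAt_inv (den_ne hu h0 h1 t)
      exact h2.comp t hden
    have := hinv.const_mul (((1 - r ^ 2 : ℝ) : ℂ) * (-Complex.I))
    convert this using 1
    · rfl
    have hne := den_ne hu h0 h1 t
    rw [Kk, div_eq_mul_inv]
    push_cast
    linear_combination ((1 - (r:ℂ)^2) * ((r:ℂ)*u*ee t) * ((1 - (r:ℂ)*u*ee t)^2)⁻¹) * Complex.I_mul_I
  rw [intervalIntegral.integral_eq_sub_of_hasDerivAt key
    ((Kk_contOn hu h0 h1).intervalIntegrable _ _)]
  have : ee (2 * Real.pi) = ee 0 := by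
    have := ee_periodic 0
    simpa using this
  rw [this]
  exact sub_self _

lemma psi_cont {ω₂ : ℝ → ℝ} (hcont : ContinuousOn ω₂ (Set.Ici 0)) (h0 : ω₂ 0 = 0)
    {ψ : ℂ → ℂ} {L : ℝ}
    (hψ : ∀ ξ ζ : ℂ, Complex.abs ξ = 1 → Complex.abs ζ = 1 →
      Complex.abs (ψ ξ - ψ ζ) ≤ L * ω₂ (Complex.abs (ξ - ζ))) :
    Continuous fun t => ψ (ee t) := by
  rw [continuous_iff_continuousAt]
  intro t₀
  rw [ContinuousAt, tendsto_iff_norm_sub_tendsto_zero]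
  have hb : Continuous fun t => L * ω₂ (Complex.abs (ee t - ee t₀)) := by
    apply continuous_const.mul
    apply hcont.comp_continuous
    · exact Complex.continuous_abs.comp (ee_cont.sub continuous_const)
    · intro x; exact Set.mem_Ici.mpr (Complex.abs.nonneg _)
  have hlim : Filter.Tendsto (fun t => L * ω₂ (Complex.abs (ee t - ee t₀))) (nhds t₀) (nhds 0) := by
    have := hb.tendsto t₀
    simpa [h0] using this
  apply squeeze_zero (fun t => norm_nonneg _) _ hlim
  intro t
  simpa [Complex.norm_eq_abs] using hψ (ee t) (ee t₀) (abs_ee t) (abs_ee t₀)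

lemma Qrep {ψ : ℂ → ℂ} (hψc : Continuous fun t => ψ (ee t)) {ξ : ℂ} (hξ : Complex.abs ξ = 1)
    {r : ℝ} (h0 : 0 ≤ r) (h1 : r < 1) :
    Qop ψ ((r:ℂ) * ξ) = (1/(2*Real.pi)) •
      ∫ t in (0:ℝ)..(2*Real.pi), Kk ((starRingEnd ℂ) ξ) r t * (ψ (ee t) - ψ ξ) := by
  have hu : Complex.abs ((starRingEnd ℂ) ξ) = 1 := by
    rw [Complex.abs_conj]; exact hξ
  have hz1 : (starRingEnd ℂ) ((r:ℂ) * ξ) = (r:ℂ) * (starRingEnd ℂ) ξ := by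
    simp [map_mul, Complex.conj_ofReal]
  have hz2 : ‖((r:ℂ) * ξ)‖ = r := by
    have hξ' : ‖ξ‖ = 1 := hξ
    simp [hξ', _root_.abs_of_nonneg h0]
  have hrep1 : Qop ψ ((r:ℂ) * ξ) = (1/(2*Real.pi)) •
      ∫ t in (0:ℝ)..(2*Real.pi), Kk ((starRingEnd ℂ) ξ) r t * ψ (ee t) := by
    unfold Qop
    congr 1
    apply intervalIntegral.integral_congr
    intro t _
    simp only [hz1, hz2, Kk, ee]
    ring
  have hint1 : IntervalIntegrable (fun t => Kk ((starRingEnd ℂ) ξ) r t * ψ (ee t))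
      MeasureTheory.volume 0 (2*Real.pi) :=
    ((Kk_contOn hu h0 h1).mul hψc).intervalIntegrable _ _
  have hint2 : IntervalIntegrable (fun t => Kk ((starRingEnd ℂ) ξ) r t * ψ ξ)
      MeasureTheory.volume 0 (2*Real.pi) :=
    ((Kk_contOn hu h0 h1).mul continuous_const).intervalIntegrable _ _
  have hsub : (∫ t in (0:ℝ)..(2*Real.pi), Kk ((starRingEnd ℂ) ξ) r t * (ψ (ee t) - ψ ξ))
      = (∫ t in (0:ℝ)..(2*Real.pi), Kk ((starRingEnd ℂ) ξ) r t * ψ (ee t))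
        - (∫ t in (0:ℝ)..(2*Real.pi), Kk ((starRingEnd ℂ) ξ) r t) * ψ ξ := by
    rw [← intervalIntegral.integral_mul_const, ← intervalIntegral.integral_sub hint1 hint2]
    apply intervalIntegral.integral_congr
    intro t _
    ring
  rw [hrep1, hsub, int_Kk_zero hu h0 h1]
  simp

lemma Qdiff_rep {ψ : ℂ → ℂ} (hψc : Continuous fun t => ψ (ee t)) {ξ : ℂ} (hξ : Complex.abs ξ = 1)
    {r₁ r₂ : ℝ} (h20 : 0 ≤ r₂) (h21 : r₂ < 1) (h10 : 0 ≤ r₁) (h11 : r₁ < 1) :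
    Qop ψ ((r₁:ℂ) * ξ) - Qop ψ ((r₂:ℂ) * ξ) = (1/(2*Real.pi)) •
      ∫ t in (0:ℝ)..(2*Real.pi),
        (Kk ((starRingEnd ℂ) ξ) r₁ t - Kk ((starRingEnd ℂ) ξ) r₂ t) * (ψ (ee t) - ψ ξ) := by
  have hu : Complex.abs ((starRingEnd ℂ) ξ) = 1 := by
    rw [Complex.abs_conj]; exact hξ
  rw [Qrep hψc hξ h10 h11, Qrep hψc hξ h20 h21, ← smul_sub]
  congr 1
  rw [← intervalIntegral.integral_sub
    (show IntervalIntegrable (fun t => Kk ((starRingEnd ℂ) ξ) r₁ t * (ψ (ee t) - ψ ξ))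
      MeasureTheory.volume 0 (2*Real.pi) from
    (((Kk_contOn hu h10 h11).mul (hψc.sub continuous_const)).intervalIntegrable _ _))
    (show IntervalIntegrable (fun t => Kk ((starRingEnd ℂ) ξ) r₂ t * (ψ (ee t) - ψ ξ))
      MeasureTheory.volume 0 (2*Real.pi) from
    (((Kk_contOn hu h20 h21).mul (hψc.sub continuous_const)).intervalIntegrable _ _))]
  apply intervalIntegral.integral_congr
  intro t _
  ring

lemma norm_smul_integral_le {f : ℝ → ℂ} {g : ℝ → ℝ} (hf : Continuous f)
    (hg : IntervalIntegrable g MeasureTheory.volume 0 (2*Real.pi))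
    (hbd : ∀ t ∈ Set.Icc (0:ℝ) (2*Real.pi), Complex.abs (f t) ≤ g t) :
    Complex.abs ((1/(2*Real.pi)) • ∫ t in (0:ℝ)..(2*Real.pi), f t)
      ≤ (1/(2*Real.pi)) * ∫ t in (0:ℝ)..(2*Real.pi), g t := by
  have hpi : (0:ℝ) ≤ 2*Real.pi := by positivity
  rw [← Complex.norm_eq_abs, norm_smul]
  have h1 : ‖(1/(2*Real.pi))‖ = 1/(2*Real.pi) := by
    rw [Real.norm_eq_abs, abs_of_pos (by positivity)]
  rw [h1]
  apply mul_le_mul_of_nonneg_left _ (by positivity)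
  calc ‖∫ t in (0:ℝ)..(2*Real.pi), f t‖ ≤ ∫ t in (0:ℝ)..(2*Real.pi), ‖f t‖ :=
        intervalIntegral.norm_integral_le_integral_norm hpi
    _ ≤ ∫ t in (0:ℝ)..(2*Real.pi), g t := by
        apply intervalIntegral.integral_mono_on hpi (hf.norm.intervalIntegrable _ _) hg
        intro t ht
        simpa [Complex.norm_eq_abs] using hbd t ht

lemma shift_integral {g : ℝ → ℝ} (hg : ContinuousOn g (Set.Ici 0)) {ξ : ℂ} (hξ : Complex.abs ξ = 1) :
    (∫ t in (0:ℝ)..(2*Real.pi), g (Complex.abs (ee t - ξ)))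
      = 2 * ∫ s in (0:ℝ)..Real.pi, g (2 * Real.sin (s/2)) := by
  obtain ⟨θ, hθ⟩ : ∃ θ : ℝ, ee θ = ξ := by
    refine ⟨Complex.arg ξ, ?_⟩
    have := Complex.abs_mul_exp_arg_mul_I ξ
    rw [hξ] at this
    simpa [ee] using this
  set h : ℝ → ℝ := fun s => g (2 * |Real.sin (s/2)|) with hh
  have hG : ∀ t, g (Complex.abs (ee t - ξ)) = h (t - θ) := by
    intro t
    rw [← hθ]
    have he : ee t - ee θ = ee θ * (ee (t - θ) - 1) := by
      rw [mul_sub, ← ee_add, mul_one]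
      ring_nf
    rw [he, map_mul, abs_ee, one_mul, abs_ee_sub_one]
  have hhcont : Continuous h := by
    apply hg.comp_continuous
    · continuity
    · intro x
      refine Set.mem_Ici.mpr (by positivity)
  have hper : Function.Periodic h (2*Real.pi) := by
    intro s
    simp only [hh]
    congr 2
    rw [show (s + 2*Real.pi)/2 = s/2 + Real.pi by ring, Real.sin_add_pi, abs_neg]
  have hsym : ∀ x : ℝ, h (2*Real.pi - x) = h x := by
    intro x
    simp only [hh]
    congr 2
    rw [show (2*Real.pi - x)/2 = Real.pi - x/2 by ring, Real.sin_pi_sub]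
  calc (∫ t in (0:ℝ)..(2*Real.pi), g (Complex.abs (ee t - ξ)))
      = ∫ t in (0:ℝ)..(2*Real.pi), h (t - θ) := by
        apply intervalIntegral.integral_congr
        intro t _
        exact hG t
    _ = ∫ t in (0-θ)..(2*Real.pi-θ), h t := intervalIntegral.integral_comp_sub_right h θ
    _ = ∫ t in (0:ℝ)..(2*Real.pi), h t := by
        have := hper.intervalIntegral_add_eq (-θ) 0
        rw [show (0:ℝ)-θ = -θ by ring, show 2*Real.pi-θ = -θ + 2*Real.pi by ring, this,
          zero_add]
    _ = (∫ t in (0:ℝ)..Real.pi, h t) + ∫ t in Real.pi..(2*Real.pi), h t := by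
        rw [intervalIntegral.integral_add_adjacent_intervals
          (hhcont.intervalIntegrable _ _) (hhcont.intervalIntegrable _ _)]
    _ = 2 * ∫ s in (0:ℝ)..Real.pi, h s := by
        have h2 : (∫ t in Real.pi..(2*Real.pi), h t) = ∫ t in (0:ℝ)..Real.pi, h t := by
          have h3 := intervalIntegral.integral_comp_sub_left (a := (0:ℝ)) (b := Real.pi)
            h (2*Real.pi)
          rw [show 2*Real.pi - Real.pi = Real.pi by ring, show 2*Real.pi - 0 = 2*Real.pi by ring]
            at h3
          rw [← h3]
          apply intervalIntegral.integral_congr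
          intro x _
          exact hsym x
        rw [h2]; ring
    _ = 2 * ∫ s in (0:ℝ)..Real.pi, g (2 * Real.sin (s/2)) := by
        congr 1
        apply intervalIntegral.integral_congr
        intro s hs
        rw [Set.uIcc_of_le Real.pi_pos.le] at hs
        simp only [hh]
        congr 2
        exact _root_.abs_of_nonneg (Real.sin_nonneg_of_nonneg_of_le_pi (by linarith [hs.1])
          (by linarith [hs.2, Real.pi_pos]))

lemma core_integral {ω₂ : ℝ → ℝ} (hcont : ContinuousOn ω₂ (Set.Ici 0))
    (hmono : MonotoneOn ω₂ (Set.Ici 0)) (hnonneg : ∀ t, 0 ≤ t → 0 ≤ ω₂ t)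
    {M₀ : ℝ}
    (hHL : ∀ lam : ℝ, lam ∈ Set.Ioc 0 Real.pi →
      lam * ∫ t in lam..Real.pi, ω₂ t / t ^ 2 ≤ M₀ * ω₂ lam)
    {lam : ℝ} (hl0 : 0 < lam) (hl1 : lam ≤ Real.pi) :
    (∫ s in (0:ℝ)..Real.pi, ω₂ s / (lam^2 + s^2/Real.pi^2))
      ≤ (1 + Real.pi^2 * M₀) * (ω₂ lam / lam) := by
  have hπ := Real.pi_pos
  have hdenpos : ∀ s : ℝ, 0 < lam^2 + s^2/Real.pi^2 := by
    intro s; positivity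
  have hcont1 : ∀ a b : ℝ, 0 ≤ a → ContinuousOn (fun s => ω₂ s / (lam^2 + s^2/Real.pi^2))
      (Set.uIcc a b) → True := fun _ _ _ _ => trivial
  have hcontOn : ∀ (a b : ℝ), 0 ≤ a → 0 ≤ b →
      IntervalIntegrable (fun s => ω₂ s / (lam^2 + s^2/Real.pi^2)) MeasureTheory.volume a b := by
    intro a b ha hb
    apply ContinuousOn.intervalIntegrable
    apply ContinuousOn.div
    · apply hcont.mono
      intro x hx
      rcases Set.mem_uIcc.mp hx with h | h
      · exact Set.mem_Ici.mpr (le_trans ha h.1)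
      · exact Set.mem_Ici.mpr (le_trans hb h.1)
    · fun_prop
    · intro x _; exact (hdenpos x).ne'
  have hsplit : (∫ s in (0:ℝ)..Real.pi, ω₂ s / (lam^2 + s^2/Real.pi^2))
      = (∫ s in (0:ℝ)..lam, ω₂ s / (lam^2 + s^2/Real.pi^2))
        + ∫ s in lam..Real.pi, ω₂ s / (lam^2 + s^2/Real.pi^2) := by
    rw [intervalIntegral.integral_add_adjacent_intervals (hcontOn 0 lam le_rfl hl0.le)
      (hcontOn lam Real.pi hl0.le hπ.le)]
  have hb1 : (∫ s in (0:ℝ)..lam, ω₂ s / (lam^2 + s^2/Real.pi^2)) ≤ ω₂ lam / lam := by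
    have : (∫ s in (0:ℝ)..lam, ω₂ s / (lam^2 + s^2/Real.pi^2))
        ≤ ∫ _ in (0:ℝ)..lam, ω₂ lam / lam^2 := by
      apply intervalIntegral.integral_mono_on hl0.le (hcontOn 0 lam le_rfl hl0.le)
        (intervalIntegrable_const)
      intro s hs
      apply div_le_div₀ (hnonneg lam hl0.le) (hmono (Set.mem_Ici.mpr hs.1)
        (Set.mem_Ici.mpr hl0.le) hs.2) (by positivity)
      have : s^2/Real.pi^2 ≥ 0 := by positivity
      linarith
    rw [intervalIntegral.integral_const, smul_eq_mul, sub_zero] at this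
    calc (∫ s in (0:ℝ)..lam, ω₂ s / (lam^2 + s^2/Real.pi^2)) ≤ lam * (ω₂ lam / lam^2) := this
      _ = ω₂ lam / lam := by field_simp
  have hb2 : (∫ s in lam..Real.pi, ω₂ s / (lam^2 + s^2/Real.pi^2))
      ≤ Real.pi^2 * M₀ * (ω₂ lam / lam) := by
    have hstep : (∫ s in lam..Real.pi, ω₂ s / (lam^2 + s^2/Real.pi^2))
        ≤ ∫ s in lam..Real.pi, Real.pi^2 * (ω₂ s / s^2) := by
      apply intervalIntegral.integral_mono_on hl1 (hcontOn lam Real.pi hl0.le hπ.le)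
      · apply ContinuousOn.intervalIntegrable
        apply ContinuousOn.mul continuousOn_const
        apply ContinuousOn.div
        · apply hcont.mono
          intro x hx
          rw [Set.uIcc_of_le hl1] at hx
          exact Set.mem_Ici.mpr (le_trans hl0.le hx.1)
        · fun_prop
        · intro x hx
          rw [Set.uIcc_of_le hl1] at hx
          exact pow_ne_zero 2 (by linarith [hx.1] : x ≠ 0)
      · intro s hs
        have hs0 : 0 < s := lt_of_lt_of_le hl0 hs.1
        rw [show Real.pi^2 * (ω₂ s / s^2) = ω₂ s / (s^2/Real.pi^2) by field_simp]
        apply div_le_div_of_nonneg_left (hnonneg s hs0.le) (by positivity)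
        have : lam^2 ≥ 0 := by positivity
        linarith
    have hHL' := hHL lam ⟨hl0, hl1⟩
    have : (∫ s in lam..Real.pi, ω₂ s / s^2) ≤ M₀ * ω₂ lam / lam := by
      rw [le_div_iff₀ hl0]
      linarith [hHL']
    calc (∫ s in lam..Real.pi, ω₂ s / (lam^2 + s^2/Real.pi^2))
        ≤ ∫ s in lam..Real.pi, Real.pi^2 * (ω₂ s / s^2) := hstep
      _ = Real.pi^2 * ∫ s in lam..Real.pi, ω₂ s / s^2 := by
          rw [intervalIntegral.integral_const_mul]
      _ ≤ Real.pi^2 * (M₀ * ω₂ lam / lam) := by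
          apply mul_le_mul_of_nonneg_left _ (by positivity)
          exact this
      _ = Real.pi^2 * M₀ * (ω₂ lam / lam) := by ring
  rw [hsplit]
  nlinarith [hb1, hb2]

lemma Kk_hasDeriv {u : ℂ} (hu : Complex.abs u = 1) (t : ℝ) {r : ℝ} (h0 : 0 ≤ r) (h1 : r < 1) :
    HasDerivAt (fun ρ : ℝ => Kk u ρ t)
      ((1 - 3*(r:ℂ)^2) * (u * ee t) / (1 - (r:ℂ)*(u * ee t))^2
        + 2 * (u * ee t)^2 * ((r:ℂ) - (r:ℂ)^3) / (1 - (r:ℂ)*(u * ee t))^3) r := by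
  set c : ℂ := u * ee t with hc
  have hfun : (fun ρ : ℝ => Kk u ρ t)
      = fun ρ : ℝ => ((ρ:ℂ) * c * (1 - (ρ:ℂ)*(ρ:ℂ))) / ((1 - (ρ:ℂ)*c)*(1 - (ρ:ℂ)*c)) := by
    funext ρ
    simp only [Kk, hc]
    push_cast
    ring_nf
  rw [hfun]
  have hre : HasDerivAt (fun ρ : ℝ => ((ρ:ℝ):ℂ)) 1 r := by
    exact Complex.ofRealCLM.hasDerivAt (x := r)
  have hN := (hre.mul_const c).mul ((hasDerivAt_const r (1:ℂ)).sub (hre.mul hre))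
  have hD := ((hasDerivAt_const r (1:ℂ)).sub (hre.mul_const c)).mul
    ((hasDerivAt_const r (1:ℂ)).sub (hre.mul_const c))
  have hne : 1 - (r:ℂ)*c ≠ 0 := by
    have := den_ne hu h0 h1 t
    rwa [mul_assoc] at this
  have hne2 : (fun ρ : ℝ => (1 - (ρ:ℂ)*c)*(1 - (ρ:ℂ)*c)) r ≠ 0 := mul_ne_zero hne hne
  have hdiv := hN.div hD hne2
  convert hdiv using 1
  · rfl
  · rfl
  simp only [Pi.mul_apply, Pi.sub_apply]
  push_cast
  field_simp
  ring

lemma Kk_diff_bound {u : ℂ} (hu : Complex.abs u = 1) {r₁ r₂ : ℝ} (h20 : 0 ≤ r₂)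
    (hlt : r₂ < r₁) (h11 : r₁ < 1) (t : ℝ) :
    Complex.abs (Kk u r₁ t - Kk u r₂ t)
      ≤ 10 / ((1-r₁)^2 + r₂ * Complex.abs (1 - u * ee t)^2) * (r₁ - r₂) := by
  set c : ℂ := u * ee t with hc
  have hcabs : Complex.abs c = 1 := by
    rw [hc, map_mul, hu, abs_ee, one_mul]
  set m2 : ℝ := (1-r₁)^2 + r₂ * Complex.abs (1 - c)^2 with hm2
  have hm2pos : 0 < m2 := by
    have h1 : (0:ℝ) < (1-r₁)^2 := pow_pos (by linarith) 2
    have h2 : 0 ≤ r₂ * Complex.abs (1 - c)^2 := by positivity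
    linarith
  have key : ∀ ρ ∈ Set.Icc r₂ r₁,
      ‖(1 - 3*(ρ:ℂ)^2) * c / (1 - (ρ:ℂ)*c)^2
        + 2 * c^2 * ((ρ:ℂ) - (ρ:ℂ)^3) / (1 - (ρ:ℂ)*c)^3‖ ≤ 10 / m2 := by
    intro ρ hρ
    have h0ρ : 0 ≤ ρ := le_trans h20 hρ.1
    have h1ρ : ρ < 1 := lt_of_le_of_lt hρ.2 h11
    set d : ℝ := Complex.abs (1 - (ρ:ℂ)*c) with hd
    have hdsq : d^2 = (1-ρ)^2 + ρ * Complex.abs (1 - c)^2 := sq_abs_one_sub_mul hcabs ρ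
    have hdlb : 1 - ρ ≤ d := by
      have := den_lb hu h0ρ h1ρ t
      rwa [mul_assoc, ← hc, ← hd] at this
    have hdpos : 0 < d := lt_of_lt_of_le (by linarith) hdlb
    have hdub : d ≤ 2 := by
      have h1 : Complex.abs (1 - (ρ:ℂ)*c) ≤ Complex.abs 1 + Complex.abs ((ρ:ℂ)*c) := by
        simpa [Complex.norm_eq_abs, Complex.abs_ofReal] using norm_sub_le (1:ℂ) ((ρ:ℂ)*c)
      rw [map_one, map_mul, hcabs, mul_one, Complex.abs_ofReal,
        _root_.abs_of_nonneg h0ρ] at h1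
      rw [hd]; linarith
    have hm2led : m2 ≤ d^2 := by
      rw [hdsq, hm2]
      have h1 : (1-r₁)^2 ≤ (1-ρ)^2 := by nlinarith [hρ.2]
      have h2 : r₂ * Complex.abs (1 - c)^2 ≤ ρ * Complex.abs (1 - c)^2 := by
        apply mul_le_mul_of_nonneg_right hρ.1 (by positivity)
      linarith
    have habs1 : Complex.abs ((1 - 3*(ρ:ℂ)^2) * c / (1 - (ρ:ℂ)*c)^2)
        = |1 - 3*ρ^2| / d^2 := by
      rw [map_div₀, map_mul, hcabs, mul_one, map_pow]
      congr 1
      rw [show (1 - 3*(ρ:ℂ)^2) = ((1 - 3*ρ^2 : ℝ) : ℂ) by push_cast; ring,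
        Complex.abs_ofReal]
    have habs2 : Complex.abs (2 * c^2 * ((ρ:ℂ) - (ρ:ℂ)^3) / (1 - (ρ:ℂ)*c)^3)
        = 2 * |ρ - ρ^3| / d^3 := by
      rw [map_div₀, map_mul, map_mul, map_pow, hcabs, map_pow]
      congr 1
      rw [show ((ρ:ℂ) - (ρ:ℂ)^3) = ((ρ - ρ^3 : ℝ) : ℂ) by push_cast; ring,
        Complex.abs_ofReal]
      simp [show Complex.abs 2 = 2 by rw [← Complex.norm_eq_abs]; simp]
    calc ‖(1 - 3*(ρ:ℂ)^2) * c / (1 - (ρ:ℂ)*c)^2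
        + 2 * c^2 * ((ρ:ℂ) - (ρ:ℂ)^3) / (1 - (ρ:ℂ)*c)^3‖
        ≤ ‖(1 - 3*(ρ:ℂ)^2) * c / (1 - (ρ:ℂ)*c)^2‖
          + ‖2 * c^2 * ((ρ:ℂ) - (ρ:ℂ)^3) / (1 - (ρ:ℂ)*c)^3‖ := norm_add_le _ _
      _ = |1 - 3*ρ^2| / d^2 + 2 * |ρ - ρ^3| / d^3 := by
          rw [Complex.norm_eq_abs, Complex.norm_eq_abs, habs1, habs2]
      _ ≤ 10 / d^2 := by
          have hnum : |1 - 3*ρ^2| * d + 2 * |ρ - ρ^3| ≤ 10 * d := by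
            have ha : |1 - 3*ρ^2| ≤ (1 - ρ^2) + 2*ρ^2 := by
              rw [abs_le]; constructor <;> nlinarith
            have hb : |ρ - ρ^3| ≤ 2*(1-ρ) := by
              rw [abs_le]; constructor <;> nlinarith
            nlinarith [sq_nonneg ρ, sq_nonneg d, hdlb, hdub, hdpos]
          have heq : |1 - 3*ρ^2| / d^2 + 2 * |ρ - ρ^3| / d^3
              = (|1 - 3*ρ^2| * d + 2 * |ρ - ρ^3|) / d^3 := by
            field_simp
          rw [heq]
          rw [div_le_div_iff₀ (by positivity) (by positivity)]
          calc (|1 - 3*ρ^2| * d + 2 * |ρ - ρ^3|) * d^2 ≤ 10 * d * d^2 := by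
                apply mul_le_mul_of_nonneg_right hnum (by positivity)
            _ = 10 * d^3 := by ring
      _ ≤ 10 / m2 := by
          apply div_le_div_of_nonneg_left (by norm_num) hm2pos hm2led
  have hmvt := Convex.norm_image_sub_le_of_norm_hasDerivWithin_le
    (f := fun ρ : ℝ => Kk u ρ t)
    (f' := fun ρ : ℝ => (1 - 3*(ρ:ℂ)^2) * c / (1 - (ρ:ℂ)*c)^2
        + 2 * c^2 * ((ρ:ℂ) - (ρ:ℂ)^3) / (1 - (ρ:ℂ)*c)^3)
    (fun ρ hρ => ((Kk_hasDeriv hu t (le_trans h20 hρ.1)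
      (lt_of_le_of_lt hρ.2 h11)).hasDerivWithinAt))
    key (convex_Icc r₂ r₁) (Set.left_mem_Icc.mpr hlt.le) (Set.right_mem_Icc.mpr hlt.le)
  rw [← Complex.norm_eq_abs]
  calc ‖Kk u r₁ t - Kk u r₂ t‖ ≤ 10 / m2 * ‖r₁ - r₂‖ := hmvt
    _ = 10 / m2 * (r₁ - r₂) := by
        rw [Real.norm_eq_abs, _root_.abs_of_nonneg (by linarith)]

lemma one_sub_conj_mul {ξ : ℂ} (hξ : Complex.abs ξ = 1) (t : ℝ) :
    Complex.abs (1 - (starRingEnd ℂ) ξ * ee t) = Complex.abs (ee t - ξ) := by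
  have hconj : (starRingEnd ℂ) ξ * ξ = 1 := by
    rw [mul_comm, Complex.mul_conj]
    rw [← Complex.sq_abs, hξ]
    norm_num
  have h : 1 - (starRingEnd ℂ) ξ * ee t = (starRingEnd ℂ) ξ * (ξ - ee t) := by
    rw [mul_sub, hconj]
  rw [h, map_mul, Complex.abs_conj, hξ, one_mul, AbsoluteValue.map_sub]

lemma x_le_two {ξ : ℂ} (hξ : Complex.abs ξ = 1) (t : ℝ) : Complex.abs (ee t - ξ) ≤ 2 := by
  have := norm_sub_le (ee t) ξ
  rw [Complex.norm_eq_abs, Complex.norm_eq_abs, Complex.norm_eq_abs, abs_ee, hξ] at this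
  linarith

lemma abs_Kk {u : ℂ} (hu : Complex.abs u = 1) {r : ℝ} (h0 : 0 ≤ r) (h1 : r < 1) (t : ℝ) :
    Complex.abs (Kk u r t) = r * (1 - r^2) / Complex.abs (1 - (r:ℂ) * u * ee t)^2 := by
  rw [Kk, map_div₀, map_pow, map_mul, map_mul, map_mul, hu, abs_ee, Complex.abs_ofReal,
    Complex.abs_ofReal, _root_.abs_of_nonneg h0, _root_.abs_of_nonneg (by nlinarith : (0:ℝ) ≤ 1 - r^2)]
  ring_nf

lemma cmp_pointwise {ω₂ : ℝ → ℝ} (hmono : MonotoneOn ω₂ (Set.Ici 0))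
    (hnonneg : ∀ t, 0 ≤ t → 0 ≤ ω₂ t) {lam : ℝ} (hlam : 0 < lam)
    {s : ℝ} (hs0 : 0 ≤ s) (hsπ : s ≤ Real.pi) :
    ω₂ (2 * Real.sin (s/2)) / (lam^2 + (2 * Real.sin (s/2))^2/4)
      ≤ ω₂ s / (lam^2 + s^2/Real.pi^2) := by
  have hπ := Real.pi_pos
  have hsin0 : 0 ≤ Real.sin (s/2) :=
    Real.sin_nonneg_of_nonneg_of_le_pi (by linarith) (by linarith)
  have hsin_le : 2 * Real.sin (s/2) ≤ s := by
    have := Real.sin_le (by linarith : (0:ℝ) ≤ s/2)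
    linarith
  have hjordan : s / Real.pi ≤ Real.sin (s/2) := by
    have := Real.mul_le_sin (x := s/2) (by linarith) (by linarith)
    calc s / Real.pi = 2 / Real.pi * (s/2) := by field_simp
      _ ≤ Real.sin (s/2) := this
  have hnum : ω₂ (2 * Real.sin (s/2)) ≤ ω₂ s :=
    hmono (Set.mem_Ici.mpr (by positivity)) (Set.mem_Ici.mpr hs0) hsin_le
  have hden : lam^2 + s^2/Real.pi^2 ≤ lam^2 + (2 * Real.sin (s/2))^2/4 := by
    have h1 : s^2/Real.pi^2 ≤ (2 * Real.sin (s/2))^2/4 := by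
      rw [show (2 * Real.sin (s/2))^2/4 = Real.sin (s/2)^2 by ring]
      calc s^2/Real.pi^2 = (s/Real.pi)^2 := by ring
        _ ≤ Real.sin (s/2)^2 := by
            apply pow_le_pow_left₀ (by positivity) hjordan
    linarith
  exact div_le_div₀ (hnonneg s hs0) hnum (by positivity) hden

lemma master_bound {ω₂ : ℝ → ℝ} (hcont : ContinuousOn ω₂ (Set.Ici 0))
    (hmono : MonotoneOn ω₂ (Set.Ici 0)) (hnonneg : ∀ t, 0 ≤ t → 0 ≤ ω₂ t)
    {M₀ : ℝ}
    (hHL : ∀ lam : ℝ, lam ∈ Set.Ioc 0 Real.pi →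
      lam * ∫ t in lam..Real.pi, ω₂ t / t ^ 2 ≤ M₀ * ω₂ lam)
    {ξ : ℂ} (hξ : Complex.abs ξ = 1) {F : ℝ → ℂ} (hF : Continuous F)
    {c lam : ℝ} (hc : 0 ≤ c) (hlam : 0 < lam) (hlamπ : lam ≤ Real.pi)
    (hbd : ∀ t ∈ Set.Icc (0:ℝ) (2*Real.pi), Complex.abs (F t)
      ≤ c * (ω₂ (Complex.abs (ee t - ξ)) / (lam^2 + (Complex.abs (ee t - ξ))^2/4))) :
    Complex.abs ((1/(2*Real.pi)) • ∫ t in (0:ℝ)..(2*Real.pi), F t)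
      ≤ (1/Real.pi) * c * ((1 + Real.pi^2 * M₀) * (ω₂ lam / lam)) := by
  have hπ := Real.pi_pos
  set g : ℝ → ℝ := fun x => c * (ω₂ x / (lam^2 + x^2/4)) with hg
  have hdenpos : ∀ x : ℝ, 0 < lam^2 + x^2/4 := by
    intro x
    have : (0:ℝ) < lam^2 := pow_pos hlam 2
    positivity
  have hgcont : ContinuousOn g (Set.Ici 0) := by
    apply ContinuousOn.mul continuousOn_const
    exact ContinuousOn.div hcont (by fun_prop) (fun x _ => (hdenpos x).ne')
  have hxcont : Continuous fun t : ℝ => Complex.abs (ee t - ξ) :=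
    Complex.continuous_abs.comp (ee_cont.sub continuous_const)
  have hxmem : ∀ t : ℝ, Complex.abs (ee t - ξ) ∈ Set.Ici (0:ℝ) :=
    fun t => Set.mem_Ici.mpr (Complex.abs.nonneg _)
  have hgxcont : Continuous fun t : ℝ => g (Complex.abs (ee t - ξ)) :=
    hgcont.comp_continuous hxcont hxmem
  have hstep1 := norm_smul_integral_le hF (hgxcont.intervalIntegrable _ _) hbd
  have hshift := shift_integral hgcont hξ
  have hcore : (∫ s in (0:ℝ)..Real.pi, g (2 * Real.sin (s/2)))
      ≤ c * ((1 + Real.pi^2 * M₀) * (ω₂ lam / lam)) := by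
    have hmono2 : (∫ s in (0:ℝ)..Real.pi, g (2 * Real.sin (s/2)))
        ≤ ∫ s in (0:ℝ)..Real.pi, c * (ω₂ s / (lam^2 + s^2/Real.pi^2)) := by
      apply intervalIntegral.integral_mono_on hπ.le
      · apply ContinuousOn.intervalIntegrable
        apply hgcont.comp
        · fun_prop
        · intro s hs
          rw [Set.uIcc_of_le hπ.le] at hs
          refine Set.mem_Ici.mpr ?_
          have : 0 ≤ Real.sin (s/2) :=
            Real.sin_nonneg_of_nonneg_of_le_pi (by linarith [hs.1]) (by linarith [hs.2])
          linarith
      · apply ContinuousOn.intervalIntegrable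
        apply ContinuousOn.mul continuousOn_const
        apply ContinuousOn.div
        · apply hcont.mono
          intro s hs
          rw [Set.uIcc_of_le hπ.le] at hs
          exact Set.mem_Ici.mpr hs.1
        · fun_prop
        · intro s _
          have h2 : (0:ℝ) < lam^2 := pow_pos hlam 2
          positivity
      · intro s hs
        rw [hg]
        apply mul_le_mul_of_nonneg_left _ hc
        exact cmp_pointwise hmono hnonneg hlam hs.1 hs.2
    calc (∫ s in (0:ℝ)..Real.pi, g (2 * Real.sin (s/2)))
        ≤ ∫ s in (0:ℝ)..Real.pi, c * (ω₂ s / (lam^2 + s^2/Real.pi^2)) := hmono2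
      _ = c * ∫ s in (0:ℝ)..Real.pi, ω₂ s / (lam^2 + s^2/Real.pi^2) := by
          rw [intervalIntegral.integral_const_mul]
      _ ≤ c * ((1 + Real.pi^2 * M₀) * (ω₂ lam / lam)) := by
          apply mul_le_mul_of_nonneg_left _ hc
          exact core_integral hcont hmono hnonneg hHL hlam hlamπ
  calc Complex.abs ((1/(2*Real.pi)) • ∫ t in (0:ℝ)..(2*Real.pi), F t)
      ≤ (1/(2*Real.pi)) * ∫ t in (0:ℝ)..(2*Real.pi), g (Complex.abs (ee t - ξ)) := hstep1
    _ = (1/(2*Real.pi)) * (2 * ∫ s in (0:ℝ)..Real.pi, g (2 * Real.sin (s/2))) := by rw [hshift]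
    _ ≤ (1/(2*Real.pi)) * (2 * (c * ((1 + Real.pi^2 * M₀) * (ω₂ lam / lam)))) := by
        apply mul_le_mul_of_nonneg_left _ (by positivity)
        linarith [hcore]
    _ = (1/Real.pi) * c * ((1 + Real.pi^2 * M₀) * (ω₂ lam / lam)) := by
        field_simp

lemma single_bound {ω₂ : ℝ → ℝ} (hcont : ContinuousOn ω₂ (Set.Ici 0))
    (hmono : MonotoneOn ω₂ (Set.Ici 0)) (hnonneg : ∀ t, 0 ≤ t → 0 ≤ ω₂ t) (h0 : ω₂ 0 = 0)
    {M₀ : ℝ}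
    (hHL : ∀ lam : ℝ, lam ∈ Set.Ioc 0 Real.pi →
      lam * ∫ t in lam..Real.pi, ω₂ t / t ^ 2 ≤ M₀ * ω₂ lam)
    {ψ : ℂ → ℂ} {L : ℝ} (hL : 0 ≤ L)
    (hψ : ∀ ξ ζ : ℂ, Complex.abs ξ = 1 → Complex.abs ζ = 1 →
      Complex.abs (ψ ξ - ψ ζ) ≤ L * ω₂ (Complex.abs (ξ - ζ)))
    {ξ : ℂ} (hξ : Complex.abs ξ = 1) {r : ℝ} (hr : 1/4 ≤ r) (h1 : r < 1) :
    Complex.abs (Qop ψ ((r:ℂ) * ξ))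
      ≤ (1/Real.pi) * (2*(1-r)*L) * ((1 + Real.pi^2 * M₀) * (ω₂ (1-r) / (1-r))) := by
  have hπ := Real.pi_pos
  have hψc := psi_cont hcont h0 hψ
  have h0r : (0:ℝ) ≤ r := le_trans (by norm_num) hr
  have hu : Complex.abs ((starRingEnd ℂ) ξ) = 1 := by rw [Complex.abs_conj]; exact hξ
  have hlam : 0 < 1 - r := by linarith
  rw [Qrep hψc hξ h0r h1]
  apply master_bound hcont hmono hnonneg hHL hξ
    ((Kk_contOn hu h0r h1).mul (hψc.sub continuous_const))
    (by positivity) hlam (by linarith [Real.pi_gt_three])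
  intro t _
  set x : ℝ := Complex.abs (ee t - ξ) with hx
  have hx0 : 0 ≤ x := Complex.abs.nonneg _
  have hdenpos : (0:ℝ) < (1-r)^2 + x^2/4 := by
    have : (0:ℝ) < (1-r)^2 := pow_pos hlam 2
    positivity
  have hd2 : Complex.abs (1 - (r:ℂ) * (starRingEnd ℂ) ξ * ee t)^2 = (1-r)^2 + r * x^2 := by
    rw [mul_assoc, sq_abs_one_sub_mul (by rw [map_mul, hu, abs_ee, one_mul]) r,
      one_sub_conj_mul hξ t]
  have hKk : Complex.abs (Kk ((starRingEnd ℂ) ξ) r t) ≤ 2*(1-r) / ((1-r)^2 + x^2/4) := by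
    rw [abs_Kk hu h0r h1 t, hd2]
    apply div_le_div₀ (by linarith) (by nlinarith) hdenpos (by nlinarith)
  have hψd : Complex.abs (ψ (ee t) - ψ ξ) ≤ L * ω₂ x := hψ (ee t) ξ (abs_ee t) hξ
  rw [Pi.mul_apply, map_mul]
  calc Complex.abs (Kk ((starRingEnd ℂ) ξ) r t) * Complex.abs (ψ (ee t) - ψ ξ)
      ≤ (2*(1-r) / ((1-r)^2 + x^2/4)) * (L * ω₂ x) := by
        apply mul_le_mul hKk hψd (Complex.abs.nonneg _) (by positivity)
    _ = 2*(1-r)*L * (ω₂ x / ((1-r)^2 + x^2/4)) := by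
        field_simp

lemma small_bound {ω₂ : ℝ → ℝ} (hcont : ContinuousOn ω₂ (Set.Ici 0))
    (hmono : MonotoneOn ω₂ (Set.Ici 0)) (hnonneg : ∀ t, 0 ≤ t → 0 ≤ ω₂ t) (h0 : ω₂ 0 = 0)
    {ψ : ℂ → ℂ} {L : ℝ} (hL : 0 ≤ L)
    (hψ : ∀ ξ ζ : ℂ, Complex.abs ξ = 1 → Complex.abs ζ = 1 →
      Complex.abs (ψ ξ - ψ ζ) ≤ L * ω₂ (Complex.abs (ξ - ζ)))
    {ξ : ℂ} (hξ : Complex.abs ξ = 1) {r : ℝ} (h0r : 0 ≤ r) (hr : r ≤ 1/2) :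
    Complex.abs (Qop ψ ((r:ℂ) * ξ)) ≤ 2 * (L * ω₂ 2) := by
  have hπ := Real.pi_pos
  have hψc := psi_cont hcont h0 hψ
  have h1 : r < 1 := by linarith
  have hu : Complex.abs ((starRingEnd ℂ) ξ) = 1 := by rw [Complex.abs_conj]; exact hξ
  rw [Qrep hψc hξ h0r h1]
  have hbd : ∀ t ∈ Set.Icc (0:ℝ) (2*Real.pi),
      Complex.abs (Kk ((starRingEnd ℂ) ξ) r t * (ψ (ee t) - ψ ξ)) ≤ 2 * (L * ω₂ 2) := by
    intro t _
    have hd := den_lb hu h0r h1 t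
    have hKk : Complex.abs (Kk ((starRingEnd ℂ) ξ) r t) ≤ 2 := by
      rw [abs_Kk hu h0r h1 t]
      have hd2 : (1-r)^2 ≤ Complex.abs (1 - (r:ℂ) * (starRingEnd ℂ) ξ * ee t)^2 :=
        pow_le_pow_left₀ (by linarith) hd 2
      rw [div_le_iff₀ (by nlinarith [hd] :
        (0:ℝ) < Complex.abs (1 - (r:ℂ) * (starRingEnd ℂ) ξ * ee t)^2)]
      nlinarith [hd2]
    have hψd : Complex.abs (ψ (ee t) - ψ ξ) ≤ L * ω₂ 2 := by
      calc Complex.abs (ψ (ee t) - ψ ξ) ≤ L * ω₂ (Complex.abs (ee t - ξ)) :=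
            hψ (ee t) ξ (abs_ee t) hξ
        _ ≤ L * ω₂ 2 := by
            apply mul_le_mul_of_nonneg_left _ hL
            exact hmono (Set.mem_Ici.mpr (Complex.abs.nonneg _))
              (Set.mem_Ici.mpr (by norm_num)) (x_le_two hξ t)
    rw [map_mul]
    exact mul_le_mul hKk hψd (Complex.abs.nonneg _) (by norm_num)
  have hstep1 := norm_smul_integral_le
    ((Kk_contOn hu h0r h1).mul (hψc.sub continuous_const))
    (intervalIntegrable_const) hbd
  calc Complex.abs ((1/(2*Real.pi)) • ∫ t in (0:ℝ)..(2*Real.pi),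
        Kk ((starRingEnd ℂ) ξ) r t * (ψ (ee t) - ψ ξ))
      ≤ (1/(2*Real.pi)) * ∫ _t in (0:ℝ)..(2*Real.pi), 2 * (L * ω₂ 2) := hstep1
    _ = 2 * (L * ω₂ 2) := by
        rw [intervalIntegral.integral_const, smul_eq_mul, sub_zero]
        field_simp

lemma ratio_le {ω₂ : ℝ → ℝ} (hanti : AntitoneOn (fun t => ω₂ t / t) (Set.Ioi 0))
    {a b : ℝ} (ha : 0 < a) (hab : a ≤ b) : ω₂ b / b ≤ ω₂ a / a :=
  hanti (Set.mem_Ioi.mpr ha) (Set.mem_Ioi.mpr (lt_of_lt_of_le ha hab)) hab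

lemma ratio_mul_le {ω₂ : ℝ → ℝ} (hanti : AntitoneOn (fun t => ω₂ t / t) (Set.Ioi 0))
    {a b : ℝ} (ha : 0 < a) (hab : a ≤ b) : ω₂ b * a ≤ ω₂ a * b := by
  have h := ratio_le hanti ha hab
  have hb : 0 < b := lt_of_lt_of_le ha hab
  rw [div_le_div_iff₀ hb ha] at h
  linarith


set_option maxHeartbeats 2000000 in
/-- Lemma 2.4: radial Lipschitz estimate for `Q[ψ]`:
`|Q[ψ](r₁ξ) - Q[ψ](r₂ξ)| ≤ M L ω₂(r₁ - r₂)` for `ξ ∈ 𝕋` and `0 ≤ r₂ < r₁ < 1`. -/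
theorem Qop_radial_lipschitz (ω₂ : ℝ → ℝ)
    (hcont : ContinuousOn ω₂ (Set.Ici 0))
    (hmono : MonotoneOn ω₂ (Set.Ici 0))
    (hnonneg : ∀ t, 0 ≤ t → 0 ≤ ω₂ t)
    (h0 : ω₂ 0 = 0)
    (hanti : AntitoneOn (fun t => ω₂ t / t) (Set.Ioi 0))
    (M₀ : ℝ) (hM₀ : 0 < M₀)
    (hHL : ∀ lam : ℝ, lam ∈ Set.Ioc 0 Real.pi →
      lam * ∫ t in lam..Real.pi, ω₂ t / t ^ 2 ≤ M₀ * ω₂ lam)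
    (ψ : ℂ → ℂ) (L : ℝ) (hL : 0 ≤ L)
    (hψ : ∀ ξ ζ : ℂ, ‖ξ‖ = 1 → ‖ζ‖ = 1 →
      ‖ψ ξ - ψ ζ‖ ≤ L * ω₂ (‖ξ - ζ‖))
    :
    ∃ M : ℝ, 0 < M ∧ ∀ (ξ : ℂ), ‖ξ‖ = 1 → ∀ r₁ r₂ : ℝ,
      0 ≤ r₂ → r₂ < r₁ → r₁ < 1 →
      ‖Qop ψ ((r₁ : ℂ) * ξ) - Qop ψ ((r₂ : ℂ) * ξ)‖ ≤ M * L * ω₂ (r₁ - r₂) := by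
  have hπ := Real.pi_pos
  have hπ3 := Real.pi_gt_three
  have hPnn : (0:ℝ) ≤ Real.pi^2 * M₀ := by positivity
  have hP1 : (1:ℝ) ≤ 1 + Real.pi^2 * M₀ := by linarith
  refine ⟨100 * (1 + Real.pi^2 * M₀), by linarith, ?_⟩
  intro ξ hξ r₁ r₂ h20 hlt h11
  have hδ : 0 < r₁ - r₂ := by linarith
  have hωδ : 0 ≤ ω₂ (r₁ - r₂) := hnonneg _ hδ.le
  have hψc := psi_cont hcont h0 hψ
  have hu : Complex.abs ((starRingEnd ℂ) ξ) = 1 := by rw [Complex.abs_conj]; exact hξ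
  have hLω : 0 ≤ L * ω₂ (r₁ - r₂) := mul_nonneg hL hωδ
  have hsimp : ∀ r : ℝ, r < 1 →
      (1/Real.pi) * (2*(1-r)*L) * ((1 + Real.pi^2 * M₀) * (ω₂ (1-r) / (1-r)))
        = (2/Real.pi) * ((1 + Real.pi^2 * M₀) * (L * ω₂ (1-r))) := by
    intro r hr
    have h1r : (1-r) ≠ 0 := by intro h; rw [sub_eq_zero] at h; exact absurd h.symm hr.ne
    field_simp
  by_cases hA : r₁ ≤ 1/2
  · -- Case A : both radii small; MVT with uniform kernel bound
    rw [Qdiff_rep hψc hξ h20 (by linarith) (by linarith) h11]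
    have hbd : ∀ t ∈ Set.Icc (0:ℝ) (2*Real.pi),
        Complex.abs ((Kk ((starRingEnd ℂ) ξ) r₁ t - Kk ((starRingEnd ℂ) ξ) r₂ t)
          * (ψ (ee t) - ψ ξ)) ≤ (40*(r₁-r₂)) * (L * ω₂ 2) := by
      intro t _
      have hK := Kk_diff_bound hu h20 hlt h11 t
      set m2 : ℝ := (1-r₁)^2 + r₂ * Complex.abs (1 - (starRingEnd ℂ) ξ * ee t)^2 with hm2
      have hm2q : (1:ℝ)/4 ≤ m2 := by
        have h1 : (1/2:ℝ) ≤ 1 - r₁ := by linarith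
        have h2 : (0:ℝ) ≤ r₂ * Complex.abs (1 - (starRingEnd ℂ) ξ * ee t)^2 := by positivity
        nlinarith
      have hK' : Complex.abs (Kk ((starRingEnd ℂ) ξ) r₁ t - Kk ((starRingEnd ℂ) ξ) r₂ t)
          ≤ 40*(r₁-r₂) := by
        calc Complex.abs (Kk ((starRingEnd ℂ) ξ) r₁ t - Kk ((starRingEnd ℂ) ξ) r₂ t)
            ≤ 10/m2 * (r₁-r₂) := hK
          _ ≤ 40*(r₁-r₂) := by
              apply mul_le_mul_of_nonneg_right _ hδ.le
              rw [div_le_iff₀ (by linarith)]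
              linarith
      have hψd : Complex.abs (ψ (ee t) - ψ ξ) ≤ L * ω₂ 2 := by
        calc Complex.abs (ψ (ee t) - ψ ξ) ≤ L * ω₂ (Complex.abs (ee t - ξ)) :=
              hψ (ee t) ξ (abs_ee t) hξ
          _ ≤ L * ω₂ 2 := by
              apply mul_le_mul_of_nonneg_left _ hL
              exact hmono (Set.mem_Ici.mpr (Complex.abs.nonneg _))
                (Set.mem_Ici.mpr (by norm_num)) (x_le_two hξ t)
      rw [map_mul]
      apply mul_le_mul hK' hψd (Complex.abs.nonneg _) (by positivity)
    have hstep := norm_smul_integral_le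
      (((Kk_contOn hu (by linarith) (by linarith)).sub (Kk_contOn hu h20 (by linarith))).mul
        (hψc.sub continuous_const))
      intervalIntegrable_const hbd
    have hratio : ω₂ 2 * (r₁ - r₂) ≤ ω₂ (r₁ - r₂) * 2 := ratio_mul_le hanti hδ (by linarith)
    calc Complex.abs ((1/(2*Real.pi)) • ∫ t in (0:ℝ)..(2*Real.pi),
          (Kk ((starRingEnd ℂ) ξ) r₁ t - Kk ((starRingEnd ℂ) ξ) r₂ t) * (ψ (ee t) - ψ ξ))
        ≤ (1/(2*Real.pi)) * ∫ _t in (0:ℝ)..(2*Real.pi), (40*(r₁-r₂)) * (L * ω₂ 2) := hstep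
      _ = 40*(r₁-r₂) * (L * ω₂ 2) := by
          rw [intervalIntegral.integral_const, smul_eq_mul, sub_zero]
          field_simp
      _ ≤ 100 * (1 + Real.pi^2 * M₀) * L * ω₂ (r₁ - r₂) := by
          have e1 : 40*(r₁-r₂) * (L * ω₂ 2) = 40 * (L * (ω₂ 2 * (r₁-r₂))) := by ring
          have e2 : 100 * (1 + Real.pi^2 * M₀) * L * ω₂ (r₁ - r₂)
              = 100 * ((1 + Real.pi^2 * M₀) * (L * ω₂ (r₁-r₂))) := by ring
          have h3 : L * (ω₂ 2 * (r₁-r₂)) ≤ L * (ω₂ (r₁-r₂) * 2) :=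
            mul_le_mul_of_nonneg_left hratio hL
          have h4 : L * ω₂ (r₁-r₂) ≤ (1 + Real.pi^2 * M₀) * (L * ω₂ (r₁-r₂)) :=
            le_mul_of_one_le_left hLω hP1
          have e3 : L * (ω₂ (r₁-r₂) * 2) = 2 * (L * ω₂ (r₁-r₂)) := by ring
          linarith
  · push_neg at hA
    by_cases hB : r₂ < 1/4
    · -- Case B : r₁ large, r₂ small; triangle inequality
      have hQ1 := single_bound hcont hmono hnonneg h0 hHL hL hψ hξ
        (show (1:ℝ)/4 ≤ r₁ by linarith) h11
      rw [hsimp r₁ h11] at hQ1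
      have hQ2 := small_bound hcont hmono hnonneg h0 hL hψ hξ h20
        (show r₂ ≤ 1/2 by linarith)
      have htri : Complex.abs (Qop ψ ((r₁:ℂ) * ξ) - Qop ψ ((r₂:ℂ) * ξ))
          ≤ Complex.abs (Qop ψ ((r₁:ℂ) * ξ)) + Complex.abs (Qop ψ ((r₂:ℂ) * ξ)) := by
        simpa [Complex.norm_eq_abs] using norm_sub_le (Qop ψ ((r₁:ℂ) * ξ)) (Qop ψ ((r₂:ℂ) * ξ))
      have hδ4 : (1:ℝ)/4 ≤ r₁ - r₂ := by linarith
      have h14 : ω₂ (1/4) ≤ ω₂ (r₁-r₂) :=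
        hmono (Set.mem_Ici.mpr (by norm_num)) (Set.mem_Ici.mpr hδ.le) hδ4
      have h12 : ω₂ (1/2) ≤ 2 * ω₂ (1/4) := by
        have := ratio_mul_le hanti (show (0:ℝ) < 1/4 by norm_num)
          (show (1:ℝ)/4 ≤ 1/2 by norm_num)
        linarith
      have h1r1 : ω₂ (1-r₁) ≤ ω₂ (1/2) :=
        hmono (Set.mem_Ici.mpr (by linarith)) (Set.mem_Ici.mpr (by norm_num)) (by linarith)
      have h2b : ω₂ 2 ≤ 8 * ω₂ (1/4) := by
        have := ratio_mul_le hanti (show (0:ℝ) < 1/4 by norm_num)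
          (show (1:ℝ)/4 ≤ 2 by norm_num)
        linarith
      have h14nn : 0 ≤ ω₂ (1/4) := hnonneg _ (by norm_num)
      have hfrac : (2:ℝ)/Real.pi ≤ 1 := by
        rw [div_le_one hπ]; linarith
      have hω1 : ω₂ (1-r₁) ≤ 2 * ω₂ (r₁-r₂) := by linarith
      have hω2 : ω₂ 2 ≤ 8 * ω₂ (r₁-r₂) := by linarith
      have hstep1 : Complex.abs (Qop ψ ((r₁:ℂ) * ξ))
          ≤ (1 + Real.pi^2 * M₀) * (L * (2 * ω₂ (r₁-r₂))) := by
        calc Complex.abs (Qop ψ ((r₁:ℂ) * ξ))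
            ≤ (2/Real.pi) * ((1 + Real.pi^2 * M₀) * (L * ω₂ (1-r₁))) := hQ1
          _ ≤ 1 * ((1 + Real.pi^2 * M₀) * (L * (2 * ω₂ (r₁-r₂)))) := by
              apply mul_le_mul hfrac _ _ (by norm_num)
              · apply mul_le_mul_of_nonneg_left _ (by linarith)
                apply mul_le_mul_of_nonneg_left hω1 hL
              · exact mul_nonneg (by linarith) (mul_nonneg hL (hnonneg _ (by linarith)))
          _ = (1 + Real.pi^2 * M₀) * (L * (2 * ω₂ (r₁-r₂))) := one_mul _
      have hstep2 : Complex.abs (Qop ψ ((r₂:ℂ) * ξ)) ≤ 16 * (L * ω₂ (r₁-r₂)) := by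
        calc Complex.abs (Qop ψ ((r₂:ℂ) * ξ)) ≤ 2 * (L * ω₂ 2) := hQ2
          _ ≤ 16 * (L * ω₂ (r₁-r₂)) := by
              have h3 : L * ω₂ 2 ≤ L * (8 * ω₂ (r₁-r₂)) :=
                mul_le_mul_of_nonneg_left hω2 hL
              linarith
      calc Complex.abs (Qop ψ ((r₁:ℂ) * ξ) - Qop ψ ((r₂:ℂ) * ξ))
          ≤ Complex.abs (Qop ψ ((r₁:ℂ) * ξ)) + Complex.abs (Qop ψ ((r₂:ℂ) * ξ)) := htri
        _ ≤ (1 + Real.pi^2 * M₀) * (L * (2 * ω₂ (r₁-r₂))) + 16 * (L * ω₂ (r₁-r₂)) := by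
            linarith
        _ ≤ 100 * (1 + Real.pi^2 * M₀) * L * ω₂ (r₁ - r₂) := by
            have e1 : (1 + Real.pi^2 * M₀) * (L * (2 * ω₂ (r₁-r₂)))
                = 2 * ((1 + Real.pi^2 * M₀) * (L * ω₂ (r₁-r₂))) := by ring
            have e2 : 100 * (1 + Real.pi^2 * M₀) * L * ω₂ (r₁ - r₂)
                = 100 * ((1 + Real.pi^2 * M₀) * (L * ω₂ (r₁-r₂))) := by ring
            have h4 : L * ω₂ (r₁-r₂) ≤ (1 + Real.pi^2 * M₀) * (L * ω₂ (r₁-r₂)) :=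
              le_mul_of_one_le_left hLω hP1
            linarith
    · push_neg at hB
      by_cases hC : r₁ - r₂ ≤ 1 - r₁
      · -- Case C1 : close radii; MVT with sharp kernel bound and HL estimate
        rw [Qdiff_rep hψc hξ h20 (by linarith) (by linarith) h11]
        have hlam : (0:ℝ) < 1 - r₁ := by linarith
        have hmb := master_bound hcont hmono hnonneg hHL hξ
          (F := fun t => (Kk ((starRingEnd ℂ) ξ) r₁ t - Kk ((starRingEnd ℂ) ξ) r₂ t)
            * (ψ (ee t) - ψ ξ))
          (((Kk_contOn hu (by linarith) (by linarith)).sub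
            (Kk_contOn hu h20 (by linarith))).mul (hψc.sub continuous_const))
          (c := 10*(r₁-r₂)*L) (by positivity) hlam (by linarith) ?_
        · have hδX : (r₁-r₂) * (ω₂ (1-r₁) / (1-r₁)) ≤ ω₂ (r₁-r₂) := by
            rw [mul_div_assoc', div_le_iff₀ hlam]
            have := ratio_mul_le hanti hδ hC
            linarith
          have hXnn : 0 ≤ ω₂ (1-r₁) / (1-r₁) := div_nonneg (hnonneg _ hlam.le) hlam.le
          calc Complex.abs ((1/(2*Real.pi)) • ∫ t in (0:ℝ)..(2*Real.pi),
                (Kk ((starRingEnd ℂ) ξ) r₁ t - Kk ((starRingEnd ℂ) ξ) r₂ t) * (ψ (ee t) - ψ ξ))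
              ≤ (1/Real.pi) * (10*(r₁-r₂)*L)
                * ((1 + Real.pi^2 * M₀) * (ω₂ (1-r₁) / (1-r₁))) := hmb
            _ = (10/Real.pi) * (1 + Real.pi^2 * M₀)
                * (L * ((r₁-r₂) * (ω₂ (1-r₁) / (1-r₁)))) := by ring
            _ ≤ (10/Real.pi) * (1 + Real.pi^2 * M₀) * (L * ω₂ (r₁-r₂)) := by
                apply mul_le_mul_of_nonneg_left _ (by positivity)
                exact mul_le_mul_of_nonneg_left hδX hL
            _ ≤ 100 * (1 + Real.pi^2 * M₀) * L * ω₂ (r₁ - r₂) := by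
                have hfrac : (10:ℝ)/Real.pi ≤ 100 := by
                  rw [div_le_iff₀ hπ]; nlinarith
                have hXnn : (0:ℝ) ≤ (1 + Real.pi^2 * M₀) * (L * ω₂ (r₁-r₂)) :=
                  mul_nonneg (by linarith) hLω
                have h5 := mul_le_mul_of_nonneg_right hfrac hXnn
                calc (10/Real.pi) * (1 + Real.pi^2 * M₀) * (L * ω₂ (r₁-r₂))
                    = (10/Real.pi) * ((1 + Real.pi^2 * M₀) * (L * ω₂ (r₁-r₂))) := by ring
                  _ ≤ 100 * ((1 + Real.pi^2 * M₀) * (L * ω₂ (r₁-r₂))) := h5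
                  _ = 100 * (1 + Real.pi^2 * M₀) * L * ω₂ (r₁ - r₂) := by ring
        · -- the pointwise bound
          intro t _
          set x : ℝ := Complex.abs (ee t - ξ) with hx
          have hx0 : 0 ≤ x := Complex.abs.nonneg _
          have hdenpos : (0:ℝ) < (1-r₁)^2 + x^2/4 := by
            have : (0:ℝ) < (1-r₁)^2 := pow_pos hlam 2
            positivity
          have hK := Kk_diff_bound hu h20 hlt h11 t
          rw [one_sub_conj_mul hξ t, ← hx] at hK
          have hm2ge : (1-r₁)^2 + x^2/4 ≤ (1-r₁)^2 + r₂ * x^2 := by nlinarith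
          have hK' : Complex.abs (Kk ((starRingEnd ℂ) ξ) r₁ t - Kk ((starRingEnd ℂ) ξ) r₂ t)
              ≤ 10/((1-r₁)^2 + x^2/4) * (r₁-r₂) := by
            calc Complex.abs (Kk ((starRingEnd ℂ) ξ) r₁ t - Kk ((starRingEnd ℂ) ξ) r₂ t)
                ≤ 10/((1-r₁)^2 + r₂ * x^2) * (r₁-r₂) := hK
              _ ≤ 10/((1-r₁)^2 + x^2/4) * (r₁-r₂) := by
                  apply mul_le_mul_of_nonneg_right _ hδ.le
                  apply div_le_div_of_nonneg_left (by norm_num) hdenpos hm2ge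
          have hψd : Complex.abs (ψ (ee t) - ψ ξ) ≤ L * ω₂ x := hψ (ee t) ξ (abs_ee t) hξ
          rw [map_mul]
          calc Complex.abs (Kk ((starRingEnd ℂ) ξ) r₁ t - Kk ((starRingEnd ℂ) ξ) r₂ t)
                * Complex.abs (ψ (ee t) - ψ ξ)
              ≤ (10/((1-r₁)^2 + x^2/4) * (r₁-r₂)) * (L * ω₂ x) := by
                apply mul_le_mul hK' hψd (Complex.abs.nonneg _) (by positivity)
            _ = 10*(r₁-r₂)*L * (ω₂ x / ((1-r₁)^2 + x^2/4)) := by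
                field_simp
      · push_neg at hC
        -- Case C2 : far radii; triangle inequality with two single bounds
        have hQ1 := single_bound hcont hmono hnonneg h0 hHL hL hψ hξ
          (show (1:ℝ)/4 ≤ r₁ by linarith) h11
        rw [hsimp r₁ h11] at hQ1
        have h21 : r₂ < 1 := by linarith
        have hQ2 := single_bound hcont hmono hnonneg h0 hHL hL hψ hξ hB h21
        rw [hsimp r₂ h21] at hQ2
        have htri : Complex.abs (Qop ψ ((r₁:ℂ) * ξ) - Qop ψ ((r₂:ℂ) * ξ))
            ≤ Complex.abs (Qop ψ ((r₁:ℂ) * ξ)) + Complex.abs (Qop ψ ((r₂:ℂ) * ξ)) := by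
          simpa [Complex.norm_eq_abs] using norm_sub_le (Qop ψ ((r₁:ℂ) * ξ)) (Qop ψ ((r₂:ℂ) * ξ))
        have hω1 : ω₂ (1-r₁) ≤ ω₂ (r₁-r₂) :=
          hmono (Set.mem_Ici.mpr (by linarith)) (Set.mem_Ici.mpr hδ.le) (by linarith)
        have hω2 : ω₂ (1-r₂) ≤ 2 * ω₂ (r₁-r₂) := by
          have hm : ω₂ (1-r₂) ≤ ω₂ (2*(r₁-r₂)) :=
            hmono (Set.mem_Ici.mpr (by linarith)) (Set.mem_Ici.mpr (by linarith)) (by linarith)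
          have hr : ω₂ (2*(r₁-r₂)) * (r₁-r₂) ≤ ω₂ (r₁-r₂) * (2*(r₁-r₂)) :=
            ratio_mul_le hanti hδ (by linarith)
          nlinarith
        have hfrac : (2:ℝ)/Real.pi ≤ 1 := by
          rw [div_le_one hπ]; linarith
        have hb1 : Complex.abs (Qop ψ ((r₁:ℂ) * ξ))
            ≤ (1 + Real.pi^2 * M₀) * (L * ω₂ (r₁-r₂)) := by
          calc Complex.abs (Qop ψ ((r₁:ℂ) * ξ))
              ≤ (2/Real.pi) * ((1 + Real.pi^2 * M₀) * (L * ω₂ (1-r₁))) := hQ1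
            _ ≤ 1 * ((1 + Real.pi^2 * M₀) * (L * ω₂ (r₁-r₂))) := by
                apply mul_le_mul hfrac _ _ (by norm_num)
                · apply mul_le_mul_of_nonneg_left _ (by linarith)
                  exact mul_le_mul_of_nonneg_left hω1 hL
                · exact mul_nonneg (by linarith) (mul_nonneg hL (hnonneg _ (by linarith)))
            _ = (1 + Real.pi^2 * M₀) * (L * ω₂ (r₁-r₂)) := one_mul _
        have hb2 : Complex.abs (Qop ψ ((r₂:ℂ) * ξ))
            ≤ (1 + Real.pi^2 * M₀) * (L * (2 * ω₂ (r₁-r₂))) := by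
          calc Complex.abs (Qop ψ ((r₂:ℂ) * ξ))
              ≤ (2/Real.pi) * ((1 + Real.pi^2 * M₀) * (L * ω₂ (1-r₂))) := hQ2
            _ ≤ 1 * ((1 + Real.pi^2 * M₀) * (L * (2 * ω₂ (r₁-r₂)))) := by
                apply mul_le_mul hfrac _ _ (by norm_num)
                · apply mul_le_mul_of_nonneg_left _ (by linarith)
                  exact mul_le_mul_of_nonneg_left hω2 hL
                · exact mul_nonneg (by linarith) (mul_nonneg hL (hnonneg _ (by linarith)))
            _ = (1 + Real.pi^2 * M₀) * (L * (2 * ω₂ (r₁-r₂))) := one_mul _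
        calc Complex.abs (Qop ψ ((r₁:ℂ) * ξ) - Qop ψ ((r₂:ℂ) * ξ))
            ≤ Complex.abs (Qop ψ ((r₁:ℂ) * ξ)) + Complex.abs (Qop ψ ((r₂:ℂ) * ξ)) := htri
          _ ≤ (1 + Real.pi^2 * M₀) * (L * ω₂ (r₁-r₂))
              + (1 + Real.pi^2 * M₀) * (L * (2 * ω₂ (r₁-r₂))) := by linarith
          _ ≤ 100 * (1 + Real.pi^2 * M₀) * L * ω₂ (r₁ - r₂) := by
              have e1 : (1 + Real.pi^2 * M₀) * (L * (2 * ω₂ (r₁-r₂)))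
                  = 2 * ((1 + Real.pi^2 * M₀) * (L * ω₂ (r₁-r₂))) := by ring
              have e2 : 100 * (1 + Real.pi^2 * M₀) * L * ω₂ (r₁ - r₂)
                  = 100 * ((1 + Real.pi^2 * M₀) * (L * ω₂ (r₁-r₂))) := by ring
              have hXnn : (0:ℝ) ≤ (1 + Real.pi^2 * M₀) * (L * ω₂ (r₁-r₂)) :=
                mul_nonneg (by linarith) hLω
              linarith
end

section
/- Let ω₂ be a majorant satisfying the Hardy–Littlewood condition and ψ ∈ 𝓛_{ω₂}(𝕋) with seminorm L. Then there is a constant M > 0 such that for all z₁, z₂ ∈ 𝔻 with |z₁| = |z₂|, |Q[ψ](z₁) - Q[ψ](z₂)| ≤ M·L·ω₂(|z₁ - z₂|). -/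
open Complex

lemma hasDerivAt_expI (t : ℝ) :
    HasDerivAt (fun s : ℝ => Complex.exp (s * Complex.I)) (Complex.exp (t * Complex.I) * Complex.I) t := by
  have h1 : HasDerivAt (fun s : ℝ => ((s : ℂ) * Complex.I)) Complex.I t := by
    simpa using ((hasDerivAt_id t).ofReal_comp.mul_const Complex.I)
  simpa using h1.cexp

lemma hasDerivAt_expnegI (t : ℝ) :
    HasDerivAt (fun s : ℝ => Complex.exp (-(s * Complex.I)))
      (Complex.exp (-(t * Complex.I)) * -Complex.I) t := by
  have h1 : HasDerivAt (fun s : ℝ => (-((s : ℂ) * Complex.I))) (-Complex.I) t := by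
    simpa [Pi.neg_def] using ((hasDerivAt_id t).ofReal_comp.mul_const Complex.I).neg
  simpa using h1.cexp

lemma slit_den {z : ℂ} (hz : ‖z‖ < 1) {w : ℂ} (hw : ‖w‖ = 1) :
    1 - z * w ∈ Complex.slitPlane := by
  left
  have h1 : ‖z * w‖ < 1 := by rw [norm_mul, hw, mul_one]; exact hz
  have h2 : (z * w).re < 1 := lt_of_le_of_lt (Complex.re_le_norm _) h1
  simp only [Complex.sub_re, Complex.one_re]
  linarith

lemma den_ne_s10 {z : ℂ} (hz : ‖z‖ < 1) {w : ℂ} (hw : ‖w‖ = 1) :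
    1 - z * w ≠ 0 :=
  Complex.slitPlane_ne_zero (slit_den hz hw)

lemma cont_expI : Continuous (fun s : ℝ => Complex.exp (s * Complex.I)) := by
  exact Complex.continuous_exp.comp (by continuity)

lemma poisson_complex (z : ℂ) (hz : ‖z‖ < 1) :
    (∫ t in (0:ℝ)..(2 * Real.pi),
      (((1 - ‖z‖ ^ 2 : ℝ)) : ℂ) /
        ((1 - (starRingEnd ℂ) z * Complex.exp (t * Complex.I)) *
          (1 - z * Complex.exp (-(t * Complex.I)))))
      = ((2 * Real.pi : ℝ) : ℂ) := by
  have hzc : ‖(starRingEnd ℂ) z‖ < 1 := by rwa [Complex.norm_conj]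
  set F : ℝ → ℂ := fun t => (t : ℂ)
      + Complex.I * Complex.log (1 - (starRingEnd ℂ) z * Complex.exp (t * Complex.I))
      - Complex.I * Complex.log (1 - z * Complex.exp (-(t * Complex.I))) with hF
  have habs : ∀ t : ℝ, ‖Complex.exp ((t:ℂ) * Complex.I)‖ = 1 :=
    fun t => Complex.norm_exp_ofReal_mul_I t
  have habsneg : ∀ t : ℝ, ‖Complex.exp (-((t:ℂ) * Complex.I))‖ = 1 := by
    intro t
    rw [← Complex.norm_conj]
    simp [← Complex.exp_conj, Complex.conj_ofReal]
  have hne1 : ∀ t : ℝ, (1 - (starRingEnd ℂ) z * Complex.exp ((t:ℂ) * Complex.I)) ≠ 0 :=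
    fun t => den_ne_s10 hzc (habs t)
  have hne2 : ∀ t : ℝ, (1 - z * Complex.exp (-((t:ℂ) * Complex.I))) ≠ 0 :=
    fun t => den_ne_s10 hz (habsneg t)
  have hderiv : ∀ t : ℝ, HasDerivAt F
      ((((1 - ‖z‖ ^ 2 : ℝ)) : ℂ) /
        ((1 - (starRingEnd ℂ) z * Complex.exp (t * Complex.I)) *
          (1 - z * Complex.exp (-(t * Complex.I))))) t := by
    intro t
    have d0 : HasDerivAt (fun s : ℝ => ((s : ℂ))) 1 t := by
      simpa using (hasDerivAt_id t).ofReal_comp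
    have din1 : HasDerivAt (fun s : ℝ => 1 - (starRingEnd ℂ) z * Complex.exp (s * Complex.I))
        (-((starRingEnd ℂ) z * (Complex.exp (t * Complex.I) * Complex.I))) t :=
      ((hasDerivAt_expI t).const_mul ((starRingEnd ℂ) z)).const_sub 1
    have din2 : HasDerivAt (fun s : ℝ => 1 - z * Complex.exp (-(s * Complex.I)))
        (-(z * (Complex.exp (-(t * Complex.I)) * -Complex.I))) t :=
      ((hasDerivAt_expnegI t).const_mul z).const_sub 1
    have d1 := (din1.clog_real (slit_den hzc (habs t))).const_mul Complex.I
    have d2 := (din2.clog_real (slit_den hz (habsneg t))).const_mul Complex.I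
    have := (d0.add d1).sub d2
    convert this using 1
    · rfl
    · rfl
    have e1 := hne1 t
    have e2 := hne2 t
    have hex : Complex.exp ((t:ℂ) * Complex.I) * Complex.exp (-((t:ℂ) * Complex.I)) = 1 := by
      rw [← Complex.exp_add]; simp
    have hzz : z * (starRingEnd ℂ) z = ((‖z‖ ^ 2 : ℝ) : ℂ) := by
      rw [Complex.mul_conj]; norm_cast; rw [Complex.normSq_eq_norm_sq]
    have hzz' : z * (starRingEnd ℂ) z = ((‖z‖ : ℂ)) ^ 2 := by
      rw [hzz]; push_cast; ring
    field_simp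
    linear_combination (norm := (push_cast; ring))
      ((starRingEnd ℂ) z * Complex.exp ((t:ℂ) * Complex.I)
        + z * Complex.exp (-((t:ℂ) * Complex.I))
        - 2 * (starRingEnd ℂ) z * Complex.exp ((t:ℂ) * Complex.I)
            * z * Complex.exp (-((t:ℂ) * Complex.I))) * Complex.I_sq
      + ((starRingEnd ℂ) z * z) * hex + hzz'
  have cont_expnegI : Continuous (fun s : ℝ => Complex.exp (-(s * Complex.I))) :=
    Complex.continuous_exp.comp (by continuity)
  have hcont1 : Continuous (fun t : ℝ => (((1 - ‖z‖ ^ 2 : ℝ)) : ℂ) /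
      ((1 - (starRingEnd ℂ) z * Complex.exp (t * Complex.I)) *
        (1 - z * Complex.exp (-(t * Complex.I))))) := by
    apply continuous_const.div
    · exact (continuous_const.sub (continuous_const.mul cont_expI)).mul
        (continuous_const.sub (continuous_const.mul cont_expnegI))
    · exact fun t => mul_ne_zero (hne1 t) (hne2 t)
  have key := intervalIntegral.integral_eq_sub_of_hasDerivAt (f := F)
    (fun t _ => hderiv t) (hcont1.intervalIntegrable 0 (2 * Real.pi))
  rw [key]
  have h2pi : Complex.exp (((2 * Real.pi : ℝ) : ℂ) * Complex.I) = 1 := by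
    push_cast; exact Complex.exp_two_pi_mul_I
  have h2pi' : Complex.exp (-(((2 * Real.pi : ℝ) : ℂ) * Complex.I)) = 1 := by
    rw [Complex.exp_neg, h2pi]; simp
  simp only [hF, h2pi, h2pi', Complex.ofReal_zero, zero_mul, neg_zero, Complex.exp_zero,
    mul_one]
  push_cast
  ring

lemma poisson_real (z : ℂ) (hz : ‖z‖ < 1) :
    (∫ t in (0:ℝ)..(2 * Real.pi),
      (1 - ‖z‖ ^ 2) /
        ‖1 - (starRingEnd ℂ) z * Complex.exp (t * Complex.I)‖ ^ 2)
      = 2 * Real.pi := by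
  have hzc : ‖(starRingEnd ℂ) z‖ < 1 := by rwa [Complex.norm_conj]
  have key : ∀ t : ℝ, (((1 - ‖z‖ ^ 2) /
        ‖1 - (starRingEnd ℂ) z * Complex.exp (t * Complex.I)‖ ^ 2 : ℝ) : ℂ)
      = (((1 - ‖z‖ ^ 2 : ℝ)) : ℂ) /
        ((1 - (starRingEnd ℂ) z * Complex.exp (t * Complex.I)) *
          (1 - z * Complex.exp (-(t * Complex.I)))) := by
    intro t
    rw [Complex.ofReal_div]
    congr 1
    have hcc : (1 - z * Complex.exp (-((t:ℂ) * Complex.I)))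
        = (starRingEnd ℂ) (1 - (starRingEnd ℂ) z * Complex.exp ((t:ℂ) * Complex.I)) := by
      rw [map_sub, map_one, map_mul, Complex.conj_conj, ← Complex.exp_conj]
      simp [Complex.conj_ofReal]
    rw [hcc, Complex.mul_conj]
    rw [Complex.normSq_eq_norm_sq]
  have h1 : ((∫ t in (0:ℝ)..(2 * Real.pi),
      (1 - ‖z‖ ^ 2) /
        ‖1 - (starRingEnd ℂ) z * Complex.exp (t * Complex.I)‖ ^ 2 : ℝ) : ℂ)
      = ((2 * Real.pi : ℝ) : ℂ) := by
    rw [← intervalIntegral.integral_ofReal]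
    rw [intervalIntegral.integral_congr (g := fun t : ℝ =>
      (((1 - ‖z‖ ^ 2 : ℝ)) : ℂ) /
        ((1 - (starRingEnd ℂ) z * Complex.exp (t * Complex.I)) *
          (1 - z * Complex.exp (-(t * Complex.I))))) (fun t _ => key t)]
    exact poisson_complex z hz
  exact_mod_cast h1

lemma psi_circle_continuous (ω₂ : ℝ → ℝ) (hcont : ContinuousOn ω₂ (Set.Ici 0))
    (hnonneg : ∀ t, 0 ≤ t → 0 ≤ ω₂ t) (h0 : ω₂ 0 = 0)
    (ψ : ℂ → ℂ) (L : ℝ) (hL : 0 ≤ L)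
    (hψ : ∀ ξ ζ : ℂ, ‖ξ‖ = 1 → ‖ζ‖ = 1 →
      ‖ψ ξ - ψ ζ‖ ≤ L * ω₂ (‖ξ - ζ‖)) :
    Continuous fun t : ℝ => ψ (Complex.exp (t * Complex.I)) := by
  rw [Metric.continuous_iff]
  intro t ε hε
  have hc0 : ContinuousWithinAt ω₂ (Set.Ici 0) 0 := hcont 0 Set.self_mem_Ici
  rw [Metric.continuousWithinAt_iff] at hc0
  obtain ⟨δ, hδpos, hδ⟩ := hc0 (ε / (L + 1)) (by positivity)
  have hce : Continuous (fun s : ℝ => Complex.exp (s * Complex.I)) :=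
    Complex.continuous_exp.comp (by continuity)
  rw [Metric.continuous_iff] at hce
  obtain ⟨δ₂, hδ₂pos, hδ₂⟩ := hce t δ hδpos
  refine ⟨δ₂, hδ₂pos, fun s hs => ?_⟩
  have h1 : dist (Complex.exp (s * Complex.I)) (Complex.exp (t * Complex.I)) < δ := hδ₂ s hs
  set x : ℝ := ‖Complex.exp (s * Complex.I) - Complex.exp (t * Complex.I)‖ with hx
  have hx0 : 0 ≤ x := norm_nonneg _
  have hxδ : dist x 0 < δ := by
    rw [Real.dist_eq, sub_zero, _root_.abs_of_nonneg hx0]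
    rwa [Complex.dist_eq] at h1
  have hω : ω₂ x < ε / (L + 1) := by
    have := hδ hx0 hxδ
    rwa [Real.dist_eq, h0, sub_zero, _root_.abs_of_nonneg (hnonneg x hx0)] at this
  have h2 : dist (ψ (Complex.exp (s * Complex.I))) (ψ (Complex.exp (t * Complex.I)))
      ≤ L * ω₂ x := by
    rw [Complex.dist_eq]
    exact hψ _ _ (Complex.norm_exp_ofReal_mul_I s) (Complex.norm_exp_ofReal_mul_I t)
  calc dist (ψ (Complex.exp (s * Complex.I))) (ψ (Complex.exp (t * Complex.I)))
      ≤ L * ω₂ x := h2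
    _ ≤ L * (ε / (L + 1)) := mul_le_mul_of_nonneg_left hω.le hL
    _ < ε := by
        rw [mul_div_assoc']
        rw [div_lt_iff₀ (by linarith)]
        nlinarith

lemma key_bound (ψ : ℂ → ℂ) (gcont : Continuous fun t : ℝ => ψ (Complex.exp (t * Complex.I)))
    (z₁ : ℂ) (h₁ : ‖z₁‖ < 1) (θ : ℝ) (B : ℝ)
    (hΔ : ∀ t : ℝ, ‖ψ (Complex.exp (t * Complex.I))
      - ψ (Complex.exp ((t + θ : ℝ) * Complex.I))‖ ≤ B) :
    ‖Qop ψ z₁ - Qop ψ (z₁ * Complex.exp (θ * Complex.I))‖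
      ≤ ‖z₁‖ * B := by
  have hB : 0 ≤ B := le_trans (norm_nonneg _) (hΔ 0)
  set r : ℝ := ‖z₁‖ with hr
  set z₂ : ℂ := z₁ * Complex.exp (θ * Complex.I) with hz₂
  set E : ℝ → ℂ := fun t => Complex.exp (t * Complex.I) with hE
  have habsE : ∀ t : ℝ, ‖E t‖ = 1 := fun t => Complex.norm_exp_ofReal_mul_I t
  have habsz₂ : ‖z₂‖ = r := by
    rw [hz₂, norm_mul, Complex.norm_exp_ofReal_mul_I, mul_one]
  have hcE : Continuous E := Complex.continuous_exp.comp (by continuity)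
  have hne : ∀ t : ℝ, (1 - (starRingEnd ℂ) z₁ * E t) ≠ 0 := by
    intro t
    exact den_ne_s10 (by rwa [Complex.norm_conj]) (habsE t)
  set c : ℂ := ((1 - r ^ 2 : ℝ) : ℂ) with hc
  set f₁ : ℝ → ℂ := fun t => (starRingEnd ℂ) z₁ * E t * ψ (E t) * c
      / (1 - (starRingEnd ℂ) z₁ * E t) ^ 2 with hf₁
  set h : ℝ → ℂ := fun s => (starRingEnd ℂ) z₁ * E s * ψ (E (s + θ)) * c
      / (1 - (starRingEnd ℂ) z₁ * E s) ^ 2 with hh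
  have hEadd : ∀ s u : ℝ, E (s + u) = E s * E u := by
    intro s u
    simp only [hE]
    push_cast
    rw [add_mul, Complex.exp_add]
  have hEne : ∀ t : ℝ, E t ≠ 0 := fun t => Complex.exp_ne_zero _
  -- step A : substitution
  have stepA : (∫ t in (0:ℝ)..(2 * Real.pi), (starRingEnd ℂ) z₂ * E t * ψ (E t) * c
      / (1 - (starRingEnd ℂ) z₂ * E t) ^ 2) = ∫ t in (0:ℝ)..(2 * Real.pi), h t := by
    have hconj : (starRingEnd ℂ) z₂ = (starRingEnd ℂ) z₁ * (E θ)⁻¹ := by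
      rw [hz₂, map_mul]
      congr 1
      rw [← Complex.exp_conj, ← Complex.exp_neg]
      congr 1
      simp [Complex.conj_ofReal]
    have hpt : ∀ t : ℝ, (starRingEnd ℂ) z₂ * E t * ψ (E t) * c
        / (1 - (starRingEnd ℂ) z₂ * E t) ^ 2 = h (t - θ) := by
      intro t
      have hsub : E (t - θ) = E t * (E θ)⁻¹ := by
        have : E ((t - θ) + θ) = E (t - θ) * E θ := hEadd _ _
        rw [sub_add_cancel] at this
        field_simp [hEne θ] at this ⊢
        rw [this]
      simp only [hh, hsub, sub_add_cancel, hconj]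
      ring
    rw [intervalIntegral.integral_congr (g := fun t => h (t - θ)) (fun t _ => hpt t)]
    rw [intervalIntegral.integral_comp_sub_right h θ]
    have hper : Function.Periodic h (2 * Real.pi) := by
      intro s
      have e1 : E (s + 2 * Real.pi) = E s := by
        rw [hEadd]
        have : E (2 * Real.pi) = 1 := by
          simp only [hE]; push_cast; exact Complex.exp_two_pi_mul_I
        rw [this, mul_one]
      have e2 : (s + 2 * Real.pi) + θ = (s + θ) + 2 * Real.pi := by ring
      simp only [hh, e1, e2]
      rw [show E ((s + θ) + 2 * Real.pi) = E (s + θ) by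
        rw [hEadd]
        have : E (2 * Real.pi) = 1 := by
          simp only [hE]; push_cast; exact Complex.exp_two_pi_mul_I
        rw [this, mul_one]]
    have := hper.intervalIntegral_add_eq (0 - θ) 0
    rw [show (2 * Real.pi - θ) = (0 - θ) + 2 * Real.pi by ring, this]
    norm_num
  -- step B : difference as a single integral
  have hcψ : Continuous fun t : ℝ => ψ (E t) := gcont
  have hcψθ : Continuous fun t : ℝ => ψ (E (t + θ)) :=
    gcont.comp (continuous_id.add continuous_const)
  have hcden : Continuous fun t : ℝ => (1 - (starRingEnd ℂ) z₁ * E t) ^ 2 :=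
    ((continuous_const.sub (continuous_const.mul hcE)).pow 2)
  have hcf₁ : Continuous f₁ := by
    apply Continuous.div
    · exact ((continuous_const.mul hcE).mul hcψ).mul continuous_const
    · exact hcden
    · exact fun t => pow_ne_zero 2 (hne t)
  have hch : Continuous h := by
    apply Continuous.div
    · exact ((continuous_const.mul hcE).mul hcψθ).mul continuous_const
    · exact hcden
    · exact fun t => pow_ne_zero 2 (hne t)
  have stepB : Qop ψ z₁ - Qop ψ z₂ = (1 / (2 * Real.pi)) •
      ∫ t in (0:ℝ)..(2 * Real.pi), (starRingEnd ℂ) z₁ * E t * (ψ (E t) - ψ (E (t + θ))) * c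
        / (1 - (starRingEnd ℂ) z₁ * E t) ^ 2 := by
    have e1 : Qop ψ z₁ = (1 / (2 * Real.pi)) • ∫ t in (0:ℝ)..(2 * Real.pi), f₁ t := rfl
    have e2 : Qop ψ z₂ = (1 / (2 * Real.pi)) • ∫ t in (0:ℝ)..(2 * Real.pi), h t := by
      rw [Qop]
      simp only [habsz₂, ← hc, ← hE]
      rw [stepA]
    rw [e1, e2, ← smul_sub,
      ← intervalIntegral.integral_sub (hcf₁.intervalIntegrable _ _) (hch.intervalIntegrable _ _)]
    congr 1
    apply intervalIntegral.integral_congr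
    intro t _
    simp only [hf₁, hh]
    ring
  -- step C : bound
  have h1r : 0 ≤ 1 - r ^ 2 := by nlinarith [norm_nonneg z₁]
  have hbound : ∀ t : ℝ, ‖(starRingEnd ℂ) z₁ * E t * (ψ (E t) - ψ (E (t + θ))) * c
      / (1 - (starRingEnd ℂ) z₁ * E t) ^ 2‖
      ≤ r * B * ((1 - r ^ 2) / ‖1 - (starRingEnd ℂ) z₁ * E t‖ ^ 2) := by
    intro t
    rw [norm_div, norm_pow, norm_mul, norm_mul, norm_mul,
      Complex.norm_conj, habsE t, Complex.norm_real, Real.norm_eq_abs, _root_.abs_of_nonneg h1r, mul_one]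
    rw [div_eq_mul_one_div]
    rw [show r * B * ((1 - r ^ 2) / ‖1 - (starRingEnd ℂ) z₁ * E t‖ ^ 2)
      = r * B * ((1 - r ^ 2) * (1 / ‖1 - (starRingEnd ℂ) z₁ * E t‖ ^ 2)) by ring]
    have hpos : 0 ≤ (1 - r ^ 2) * (1 / ‖1 - (starRingEnd ℂ) z₁ * E t‖ ^ 2) := by
      apply mul_nonneg h1r
      positivity
    calc r * ‖ψ (E t) - ψ (E (t + θ))‖ * (1 - r ^ 2)
          * (1 / ‖1 - (starRingEnd ℂ) z₁ * E t‖ ^ 2)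
        = ‖ψ (E t) - ψ (E (t + θ))‖
          * (r * ((1 - r ^ 2) * (1 / ‖1 - (starRingEnd ℂ) z₁ * E t‖ ^ 2))) := by ring
      _ ≤ B * (r * ((1 - r ^ 2) * (1 / ‖1 - (starRingEnd ℂ) z₁ * E t‖ ^ 2))) := by
          apply mul_le_mul_of_nonneg_right (hΔ t)
          exact mul_nonneg (norm_nonneg z₁) hpos
      _ = r * B * ((1 - r ^ 2) * (1 / ‖1 - (starRingEnd ℂ) z₁ * E t‖ ^ 2)) := by ring
  have hgcont : Continuous fun t : ℝ =>
      r * B * ((1 - r ^ 2) / ‖1 - (starRingEnd ℂ) z₁ * E t‖ ^ 2) := by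
    apply continuous_const.mul
    apply continuous_const.div
    · exact (continuous_norm.comp (continuous_const.sub (continuous_const.mul hcE))).pow 2
    · exact fun t => pow_ne_zero 2 (norm_ne_zero_iff.mpr (hne t))
  have hnorm : ‖∫ t in (0:ℝ)..(2 * Real.pi), (starRingEnd ℂ) z₁ * E t
      * (ψ (E t) - ψ (E (t + θ))) * c / (1 - (starRingEnd ℂ) z₁ * E t) ^ 2‖
      ≤ r * B * (2 * Real.pi) := by
    have := intervalIntegral.norm_integral_le_of_norm_le
      (μ := MeasureTheory.volume) (a := (0:ℝ)) (b := 2 * Real.pi)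
      (f := fun t => (starRingEnd ℂ) z₁ * E t * (ψ (E t) - ψ (E (t + θ))) * c
        / (1 - (starRingEnd ℂ) z₁ * E t) ^ 2)
      (g := fun t => r * B * ((1 - r ^ 2) / ‖1 - (starRingEnd ℂ) z₁ * E t‖ ^ 2))
      (by positivity) (Filter.Eventually.of_forall (fun t _ => hbound t))
      (hgcont.intervalIntegrable 0 (2 * Real.pi))
    refine le_trans this (le_of_eq ?_)
    rw [intervalIntegral.integral_const_mul, poisson_real z₁ h₁]
  -- conclude
  rw [stepB, norm_smul]
  have h2π : 0 < 2 * Real.pi := by positivity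
  calc ‖(1 / (2 * Real.pi) : ℝ)‖ * ‖∫ t in (0:ℝ)..(2 * Real.pi), (starRingEnd ℂ) z₁ * E t
        * (ψ (E t) - ψ (E (t + θ))) * c / (1 - (starRingEnd ℂ) z₁ * E t) ^ 2‖
      ≤ (1 / (2 * Real.pi)) * (r * B * (2 * Real.pi)) := by
        rw [Real.norm_eq_abs, _root_.abs_of_nonneg (by positivity : (0:ℝ) ≤ 1 / (2 * Real.pi))]
        exact mul_le_mul_of_nonneg_left hnorm (by positivity)
    _ = r * B := by field_simp


/-- Lemma 2.5: equal-modulus Lipschitz estimate for `Q[ψ]`: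
`|Q[ψ](z₁) - Q[ψ](z₂)| ≤ M L ω₂(|z₁ - z₂|)` for `z₁, z₂ ∈ 𝔻` with `|z₁| = |z₂|`. -/
theorem Qop_equal_modulus_lipschitz (ω₂ : ℝ → ℝ)
    (hcont : ContinuousOn ω₂ (Set.Ici 0))
    (hmono : MonotoneOn ω₂ (Set.Ici 0))
    (hnonneg : ∀ t, 0 ≤ t → 0 ≤ ω₂ t)
    (h0 : ω₂ 0 = 0)
    (hanti : AntitoneOn (fun t => ω₂ t / t) (Set.Ioi 0))
    (M₀ : ℝ) (hM₀ : 0 < M₀)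
    (hHL : ∀ lam : ℝ, lam ∈ Set.Ioc 0 Real.pi →
      lam * ∫ t in lam..Real.pi, ω₂ t / t ^ 2 ≤ M₀ * ω₂ lam)
    (ψ : ℂ → ℂ) (L : ℝ) (hL : 0 ≤ L)
    (hψ : ∀ ξ ζ : ℂ, ‖ξ‖ = 1 → ‖ζ‖ = 1 →
      ‖ψ ξ - ψ ζ‖ ≤ L * ω₂ (‖ξ - ζ‖))
    :
    ∃ M : ℝ, 0 < M ∧ ∀ z₁ z₂ : ℂ, ‖z₁‖ < 1 → ‖z₂‖ < 1 →
      ‖z₁‖ = ‖z₂‖ →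
      ‖Qop ψ z₁ - Qop ψ z₂‖ ≤ M * L * ω₂ (‖z₁ - z₂‖) := by
  refine ⟨1, one_pos, ?_⟩
  intro z₁ z₂ h₁ h₂ heq
  by_cases hzz : z₁ = z₂
  · subst hzz
    simp only [sub_self, norm_zero, h0, mul_zero, le_refl]
  have hz0 : z₁ ≠ 0 := by
    intro h
    apply hzz
    rw [h] at heq ⊢
    symm
    rwa [norm_zero, eq_comm, norm_eq_zero] at heq
  set r : ℝ := ‖z₁‖ with hr
  have hr0 : 0 < r := norm_pos_iff.mpr hz0
  set θ : ℝ := Complex.arg (z₂ / z₁) with hθ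
  have hz₂ : z₂ = z₁ * Complex.exp (θ * Complex.I) := by
    have habs : ‖z₂ / z₁‖ = 1 := by
      rw [norm_div, ← heq, div_self hr0.ne']
    have h3 := Complex.norm_mul_exp_arg_mul_I (z₂ / z₁)
    rw [habs, Complex.ofReal_one, one_mul] at h3
    rw [← hθ] at h3
    rw [h3]
    field_simp
  set d : ℝ := ‖1 - Complex.exp (θ * Complex.I)‖ with hd
  have hd0 : 0 < d := by
    apply norm_pos_iff.mpr
    intro h
    apply hzz
    rw [hz₂, show Complex.exp ((θ:ℝ) * Complex.I) = 1 by
      have := sub_eq_zero.mp h; rw [← this], mul_one]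
  have hdist : ‖z₁ - z₂‖ = r * d := by
    rw [hz₂, show z₁ - z₁ * Complex.exp ((θ:ℝ) * Complex.I)
      = z₁ * (1 - Complex.exp ((θ:ℝ) * Complex.I)) by ring, norm_mul]
  -- the modulus bound on the circle differences
  have gcont : Continuous fun t : ℝ => ψ (Complex.exp (t * Complex.I)) :=
    psi_circle_continuous ω₂ hcont hnonneg h0 ψ L hL hψ
  have hΔ : ∀ t : ℝ, ‖ψ (Complex.exp (t * Complex.I))
      - ψ (Complex.exp ((t + θ : ℝ) * Complex.I))‖ ≤ L * ω₂ d := by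
    intro t
    have habst : ‖Complex.exp ((t:ℝ) * Complex.I)
        - Complex.exp ((t + θ : ℝ) * Complex.I)‖ = d := by
      have : Complex.exp (((t + θ : ℝ)) * Complex.I)
          = Complex.exp ((t:ℝ) * Complex.I) * Complex.exp ((θ:ℝ) * Complex.I) := by
        push_cast
        rw [add_mul, Complex.exp_add]
      rw [this, show Complex.exp ((t:ℝ) * Complex.I) - Complex.exp ((t:ℝ) * Complex.I)
          * Complex.exp ((θ:ℝ) * Complex.I)
        = Complex.exp ((t:ℝ) * Complex.I) * (1 - Complex.exp ((θ:ℝ) * Complex.I)) by ring,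
        norm_mul, Complex.norm_exp_ofReal_mul_I, one_mul]
    rw [← habst] at *
    exact hψ _ _ (Complex.norm_exp_ofReal_mul_I t) (Complex.norm_exp_ofReal_mul_I (t + θ))
  have key := key_bound ψ gcont z₁ h₁ θ (L * ω₂ d) hΔ
  rw [← hz₂] at key
  -- now  r * (L * ω₂ d) ≤ L * ω₂ (r * d)
  have hrd : r * d ≤ d := by nlinarith
  have hanti' := hanti (Set.mem_Ioi.mpr (by positivity : (0:ℝ) < r * d))
    (Set.mem_Ioi.mpr hd0) hrd
  have hkey2 : r * ω₂ d ≤ ω₂ (r * d) := by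
    have e1 : r * ω₂ d = (r * d) * (ω₂ d / d) := by
      field_simp
    rw [e1]
    calc (r * d) * (ω₂ d / d) ≤ (r * d) * (ω₂ (r * d) / (r * d)) := by
          exact mul_le_mul_of_nonneg_left hanti' (by positivity)
      _ = ω₂ (r * d) := by field_simp
  calc ‖Qop ψ z₁ - Qop ψ z₂‖ ≤ r * (L * ω₂ d) := key
    _ = L * (r * ω₂ d) := by ring
    _ ≤ L * ω₂ (r * d) := mul_le_mul_of_nonneg_left hkey2 hL
    _ = 1 * L * ω₂ (‖z₁ - z₂‖) := by rw [hdist]; ring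
end
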